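/- arXiv:0711.5014 — 3 statements merged into one kernel-verified Lean document; each statement's English description precedes it below -/
import Mathlib

section
/- Let p be a prime, let P be a finite p-group, let Q be a subgroup of P, and let φ : Q → P be an injective group homomorphism. Let i_P : P → Sym(P) be the Cayley embedding of P into the symmetric group on the underlying set of P. Then there exists an element g ∈ Sym(P) such that for all q ∈ Q, i_P(φ(q)) = g · i_P(q) · g⁻¹. -/
section Aux

variable {P : Type} [Group P] [Finite P] (Q : Subgroup P) (φ : Q →* P)
  (hφ : Function.Injective φ)

open QuotientGroup

/-- Decomposition of `P` as `Q × (right cosets of Q)`, equivariant for left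
multiplication by elements of `Q`. -/
noncomputable def rightCosetEquiv : P ≃ Q × Quotient (rightRel Q) where
  toFun x := (⟨x * (Quotient.mk _ x : Quotient (rightRel Q)).out⁻¹, by
      have h : (rightRel Q) (Quotient.mk _ x : Quotient (rightRel Q)).out x := by
        rw [← @Quotient.eq _ (rightRel Q)]
        simp
      exact (rightRel_apply).mp h⟩, Quotient.mk _ x)
  invFun qt := (qt.1 : P) * qt.2.out
  left_inv x := by simp
  right_inv := by
    rintro ⟨q, t⟩
    have ht : (Quotient.mk (rightRel Q) ((q : P) * t.out)) = t := by
      have : (rightRel Q) t.out ((q : P) * t.out) := by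
        rw [rightRel_apply]; simp
      exact (Quotient.sound ((rightRel Q).iseqv.symm this)).trans t.out_eq
    ext
    · simp [ht]
    · simpa using ht

theorem rightCosetEquiv_smul (q : Q) (x : P) :
    rightCosetEquiv Q ((q : P) * x) =
      (q * (rightCosetEquiv Q x).1, (rightCosetEquiv Q x).2) := by
  have ht : (Quotient.mk (rightRel Q) ((q : P) * x)) = Quotient.mk (rightRel Q) x := by
    refine Quotient.sound (rightRel_apply.mpr ?_)
    simp
  ext
  · simp [rightCosetEquiv, ht, mul_assoc]
  · simpa [rightCosetEquiv] using ht

end Aux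

/-- **Lemma 4 of Leary–Schuster–Yagita.**
Let `p` be a prime, `P` a finite `p`-group, `Q` a subgroup of `P`, and
`φ : Q → P` an injective group homomorphism.  Let `i_P : P → Sym(P)` be the
Cayley embedding (left multiplication).  Then there is `g ∈ Sym(P)` with
`i_P (φ q) = g * i_P q * g⁻¹` for all `q ∈ Q`. -/
theorem stmt_0 (p : ℕ) (hp : p.Prime) (P : Type) [Group P] [Finite P]
    (hP : IsPGroup p P) (Q : Subgroup P) (φ : Q →* P) (hφ : Function.Injective φ) :
    ∃ g : Equiv.Perm P, ∀ q : Q,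
      MulAction.toPermHom P P (φ q) = g * MulAction.toPermHom P P (q : P) * g⁻¹ := by
  classical
  set H : Subgroup P := φ.range with hH
  let ψ : Q ≃* H := MonoidHom.ofInjective hφ
  -- the two coset spaces
  set T := Quotient (QuotientGroup.rightRel Q)
  set T' := Quotient (QuotientGroup.rightRel H)
  have hcardQH : Nat.card Q = Nat.card H := Nat.card_congr ψ.toEquiv
  have hcard : Nat.card T = Nat.card T' := by
    have h1 : Nat.card T = Nat.card (P ⧸ Q) :=
      Nat.card_congr (QuotientGroup.quotientRightRelEquivQuotientLeftRel Q)
    have h2 : Nat.card T' = Nat.card (P ⧸ H) :=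
      Nat.card_congr (QuotientGroup.quotientRightRelEquivQuotientLeftRel H)
    have h3 := Subgroup.card_eq_card_quotient_mul_card_subgroup Q
    have h4 := Subgroup.card_eq_card_quotient_mul_card_subgroup H
    have hQpos : 0 < Nat.card Q := Nat.card_pos
    rw [h1, h2]
    have : Nat.card (P ⧸ Q) * Nat.card Q = Nat.card (P ⧸ H) * Nat.card Q := by
      rw [← h3, hcardQH, ← h4]
    exact Nat.eq_of_mul_eq_mul_right hQpos this
  have hTne : Nonempty T := ⟨Quotient.mk _ 1⟩
  have hT'ne : Nonempty T' := ⟨Quotient.mk _ 1⟩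
  have hT0 : Nat.card T ≠ 0 := Nat.card_ne_zero.mpr ⟨hTne, inferInstance⟩
  have hT'0 : Nat.card T' ≠ 0 := Nat.card_ne_zero.mpr ⟨hT'ne, inferInstance⟩
  have f : T ≃ T' :=
    (Nat.equivFinOfCardPos hT0).trans ((hcard ▸ Nat.equivFinOfCardPos hT'0).symm)
  -- equivariant decompositions
  let e : P ≃ Q × T := rightCosetEquiv Q
  let e' : P ≃ H × T' := rightCosetEquiv H
  let g : Equiv.Perm P :=
    e.trans ((Equiv.prodCongr ψ.toEquiv f).trans e'.symm)
  refine ⟨g, fun q => ?_⟩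
  have key : ∀ x : P, g ((q : P) * x) = (φ q) * g x := by
    intro x
    have h1 : e ((q : P) * x) = (q * (e x).1, (e x).2) := rightCosetEquiv_smul Q q x
    have h2 : ∀ (h : H) (t : T'), e'.symm (h, t) = (h : P) * t.out := by
      intro h t; rfl
    have hψ : ∀ a : Q, ((ψ a : H) : P) = φ a := fun a =>
      MonoidHom.ofInjective_apply hφ
    have hψ2 : ∀ a : Q, ((ψ.toEquiv a : H) : P) = φ a := hψ
    simp only [g, Equiv.trans_apply, h1, Equiv.prodCongr_apply, Prod.map]
    rw [h2, h2]
    have hm : ψ.toEquiv (q * (e x).1) = ψ q * ψ (e x).1 := map_mul ψ q _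
    rw [hm]
    simp only [Subgroup.coe_mul, hψ, hψ2, mul_assoc]
  ext x
  simp only [Equiv.Perm.mul_apply, MulAction.toPermHom_apply, MulAction.toPerm_apply]
  have := key (g⁻¹ x)
  simp only [smul_eq_mul] at *
  rw [this]
  simp
end

section
/- Let p be a prime, let P be a finite p-group, let G = Sym(P) be the symmetric group on the underlying set of P, and regard P as a subgroup of G via the Cayley embedding i_P. Then for every n ≥ 0, every class in the image of the restriction map i_P^* : H^n(G; F_p) → H^n(P; F_p) is universally stable: for every x ∈ H^n(G; F_p), every subgroup Q ≤ P, and every injective group homomorphism ψ : Q → P, one has ψ^*(i_P^*(x)) = Res^P_Q(i_P^*(x)) in H^n(Q; F_p). -/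
open CategoryTheory groupCohomology

noncomputable section

variable {k : Type} [CommRing k]

/-- Precomposition with a group homomorphism `f : H →* G` on inhomogeneous cochains
with trivial coefficients. -/
def trivialCochainsMap {G H : Type} [Group G] [Group H] (f : H →* G) :
    inhomogeneousCochains (Rep.trivial k G k) ⟶ inhomogeneousCochains (Rep.trivial k H k) where
  f n := ModuleCat.ofHom
    { toFun := fun φ (v : Fin n → H) => φ (fun i => f (v i))
      map_add' := fun _ _ => rfl
      map_smul' := fun _ _ => rfl }
  comm' i j hij := by
    obtain rfl : i + 1 = j := hij
    ext φ g
    simp [inhomogeneousCochains.d_hom_apply, CochainComplex.of.d]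
    refine Finset.sum_congr rfl fun j _ => ?_
    have h : (fun l => f (Fin.contractNth j (· * ·) g l))
        = Fin.contractNth j (· * ·) (fun l => f (g l)) := by
      funext l
      unfold Fin.contractNth
      split_ifs <;> simp [map_mul]
    rw [h]

/-- The map `f^* : Hⁿ(G; k) → Hⁿ(H; k)` on group cohomology with (trivial) coefficients
in `k` induced by a group homomorphism `f : H →* G`. -/
def cohomologyRes {G H : Type} [Group G] [Group H] (f : H →* G) (n : ℕ) :
    groupCohomology (Rep.trivial k G k) n ⟶ groupCohomology (Rep.trivial k H k) n :=
  HomologicalComplex.homologyMap (trivialCochainsMap f) n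


namespace LSYAux


set_option linter.unusedSectionVars false
set_option linter.unreachableTactic false
set_option linter.unusedTactic false
set_option maxHeartbeats 1000000

section NTools
variable {G : Type} [Group G]




/-- Insert `τ` at position `i`, conjugating later entries by `τ`. -/
def insN (τ : G) (i : ℕ) (f : ℕ → G) : ℕ → G := fun m =>
  if m < i then f m else if m = i then τ else τ⁻¹ * f (m - 1) * τ

/-- Multiply entries `j` and `j+1` together. -/
def conN (j : ℕ) (f : ℕ → G) : ℕ → G := fun m =>
  if m < j then f m else if m = j then f m * f (m + 1) else f (m + 1)

def extN (n : ℕ) (g : Fin n → G) : ℕ → G := fun m => if h : m < n then g ⟨m, h⟩ else 1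

def resN (n : ℕ) (f : ℕ → G) : Fin n → G := fun m => f m

lemma resN_extN (n : ℕ) (g : Fin n → G) : resN n (extN n g) = g := by
  funext m; simp [resN, extN, m.isLt]

lemma resN_congr {n : ℕ} {f₁ f₂ : ℕ → G} (h : ∀ m < n, f₁ m = f₂ m) :
    resN n f₁ = resN n f₂ := by
  funext m; exact h m m.isLt

lemma contract_eq (n : ℕ) (g : Fin (n + 1) → G) (j : Fin (n + 1)) :
    Fin.contractNth j (· * ·) g = resN n (conN (j : ℕ) (extN (n + 1) g)) := by
  funext m
  rcases lt_trichotomy (m : ℕ) (j : ℕ) with h | h | h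
  · rw [Fin.contractNth_apply_of_lt _ _ _ _ h]
    simp only [resN, conN, extN, if_pos h]
    rw [dif_pos (by omega : (m : ℕ) < n + 1)]
    congr 1
  · rw [Fin.contractNth_apply_of_eq _ _ _ _ h]
    simp only [resN, conN, extN, if_neg (by omega : ¬ (m : ℕ) < (j : ℕ)), if_pos h]
    rw [dif_pos (by omega : (m : ℕ) < n + 1), dif_pos (by omega : (m : ℕ) + 1 < n + 1)]
    congr 1
  · rw [Fin.contractNth_apply_of_gt _ _ _ _ h]
    simp only [resN, conN, extN, if_neg (by omega : ¬ (m : ℕ) < (j : ℕ)),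
      if_neg (by omega : ¬ (m : ℕ) = (j : ℕ))]
    rw [dif_pos (by omega : (m : ℕ) + 1 < n + 1)]
    congr 1

lemma insN_agree (τ : G) {n : ℕ} (i : ℕ) (hi : i ≤ n) {f₁ f₂ : ℕ → G}
    (h : ∀ m < n, f₁ m = f₂ m) : ∀ m < n + 1, insN τ i f₁ m = insN τ i f₂ m := by
  intro m hm
  simp only [insN]
  split_ifs with h1 h2
  · exact h m (by omega)
  · rfl
  · rw [h (m - 1) (by omega)]

lemma conN_agree {N : ℕ} (j : ℕ) {f₁ f₂ : ℕ → G}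
    (h : ∀ m < N + 1, f₁ m = f₂ m) : ∀ m < N, conN j f₁ m = conN j f₂ m := by
  intro m hm
  simp only [conN]
  split_ifs with h1 h2
  · exact h m (by omega)
  · rw [h m (by omega), h (m+1) (by omega)]
  · exact h (m+1) (by omega)

lemma tail_insN_zero (τ : G) (f : ℕ → G) (m : ℕ) :
    insN τ 0 f (m + 1) = τ⁻¹ * f m * τ := by
  simp [insN]

lemma tail_insN_succ (τ : G) (i : ℕ) (f : ℕ → G) (m : ℕ) :
    insN τ (i + 1) f (m + 1) = insN τ i (fun l => f (l + 1)) m := by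
  simp only [insN, Nat.add_sub_cancel]
  split_ifs <;> first | rfl | omega | (rw [Nat.sub_add_cancel (by omega)])

lemma conN_insN_lt (τ : G) (i j : ℕ) (hj : j < i) (f : ℕ → G) :
    conN j (insN τ (i + 1) f) = insN τ i (conN j f) := by
  funext m
  simp only [conN, insN, Nat.add_sub_cancel]
  split_ifs <;>
    first
      | rfl | omega
      | (rw [show m - 1 - 1 + 1 = m - 1 from Nat.sub_add_cancel (by omega)])
      | (rw [Nat.sub_add_cancel (by omega)])

lemma conN_insN_gt (τ : G) (i j : ℕ) (hj : i ≤ j) (f : ℕ → G) :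
    conN (j + 1) (insN τ i f) = insN τ i (conN j f) := by
  funext m
  simp only [conN, insN, Nat.add_sub_cancel]
  split_ifs <;>
    first
      | rfl | omega
      | (rw [Nat.sub_add_cancel (by omega)]; first | rfl | group)
      | (rw [Nat.sub_add_cancel (show 1 ≤ m by omega)])
      | group

lemma conN_insN_diag (τ : G) (i : ℕ) (f : ℕ → G) :
    conN i (insN τ i f) = conN i (insN τ (i + 1) f) := by
  funext m
  simp only [conN, insN, Nat.add_sub_cancel]
  split_ifs <;>
    first
      | rfl | omega
      | (rw [Nat.sub_add_cancel (by omega)]; first | rfl | group)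
      | group

lemma conN_insN_corner (τ : G) (i : ℕ) (f : ℕ → G) :
    ∀ m < i, conN i (insN τ i f) m = f m := by
  intro m hm
  simp only [conN, insN, if_pos hm]


end NTools


open Finset

lemma expand_square {k : Type} [CommRing k] (W : ℕ → ℕ → k) (m : ℕ) :
    ∑ i ∈ range (m + 1), ∑ j ∈ range (m + 1), W i j
      = (∑ i ∈ range m, ∑ j ∈ range m, W i j) + (∑ i ∈ range m, W i m)
        + (∑ j ∈ range m, W m j) + W m m := by
  rw [Finset.sum_range_succ]
  simp_rw [Finset.sum_range_succ]
  rw [Finset.sum_add_distrib]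
  ring

lemma shuffle {k : Type} [CommRing k] (n : ℕ) (T V : ℕ → ℕ → k)
    (hlt : ∀ i j, j < i → i ≤ n → T (i + 1) j = V i j)
    (hgt : ∀ i j, i ≤ j → j ≤ n → T i (j + 1) = V i j)
    (hdiag : ∀ i, i ≤ n → T i i = T (i + 1) i) :
    ∑ i ∈ range (n + 2), ∑ j ∈ range (n + 2), (-1 : k) ^ i * (-1 : k) ^ j * T i j
      = -(∑ i ∈ range (n + 1), ∑ j ∈ range (n + 1), (-1 : k) ^ i * (-1 : k) ^ j * V i j)
        + T (n + 1) (n + 1) := by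
  induction n with
  | zero =>
      simp only [Finset.sum_range_succ, Finset.sum_range_zero, Finset.sum_range_one]
      rw [hgt 0 0 le_rfl le_rfl, hdiag 0 le_rfl]
      norm_num
      ring
  | succ n ih =>
      have ih' := ih (fun i j h1 h2 => hlt i j h1 (h2.trans (Nat.le_succ n)))
        (fun i j h1 h2 => hgt i j h1 (h2.trans (Nat.le_succ n)))
        (fun i h => hdiag i (h.trans (Nat.le_succ n)))
      rw [show n + 1 + 2 = (n + 2) + 1 from rfl,
        expand_square (fun i j => (-1 : k) ^ i * (-1 : k) ^ j * T i j) (n + 2), ih',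
        show n + 1 + 1 = (n + 1) + 1 from rfl,
        expand_square (fun i j => (-1 : k) ^ i * (-1 : k) ^ j * V i j) (n + 1)]
      -- rewrite the edge sums
      have hcol : ∑ i ∈ range (n + 2), (-1 : k) ^ i * (-1 : k) ^ (n + 2) * T i (n + 2)
          = (∑ i ∈ range (n + 1), (-1 : k) ^ i * (-1 : k) ^ (n + 2) * V i (n + 1))
            + (-1 : k) ^ (n + 1) * (-1 : k) ^ (n + 2) * V (n + 1) (n + 1) := by
        rw [Finset.sum_range_succ, hgt (n + 1) (n + 1) le_rfl le_rfl]
        congr 1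
        refine Finset.sum_congr rfl fun i hi => ?_
        have hi' := Finset.mem_range.mp hi
        rw [hgt i (n + 1) (by omega : i ≤ n + 1) le_rfl]
      have hrow : ∑ j ∈ range (n + 2), (-1 : k) ^ (n + 2) * (-1 : k) ^ j * T (n + 2) j
          = (∑ j ∈ range (n + 1), (-1 : k) ^ (n + 2) * (-1 : k) ^ j * V (n + 1) j)
            + (-1 : k) ^ (n + 2) * (-1 : k) ^ (n + 1) * T (n + 1) (n + 1) := by
        rw [Finset.sum_range_succ, hdiag (n + 1) le_rfl]
        congr 1
        refine Finset.sum_congr rfl fun j hj => ?_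
        have hj' := Finset.mem_range.mp hj
        rw [hlt (n + 1) j (by omega) le_rfl]
      rw [hcol, hrow]
      have ha : (-1 : k) ^ (n + 1) * (-1 : k) ^ (n + 1) = 1 := by
        rw [← pow_add]
        exact Even.neg_one_pow ⟨n + 1, by ring⟩
      have hb : (-1 : k) ^ (n + 2) = -(-1 : k) ^ (n + 1) := by
        rw [pow_succ]; ring
      -- pull out constants
      simp only [hb]
      generalize (-1 : k) ^ (n + 1) = a at ha ⊢
      generalize T (n + 1) (n + 1) = t
      generalize T (n + 2) (n + 2) = u
      generalize V (n + 1) (n + 1) = C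
      rw [show ∀ S : Finset ℕ, ∀ F : ℕ → k, ∑ i ∈ S, (-1:k)^i * -a * F i
        = -a * ∑ i ∈ S, (-1:k)^i * F i from ?_, show ∀ S : Finset ℕ, ∀ F : ℕ → k,
          ∑ j ∈ S, -a * (-1:k)^j * F j = -a * ∑ j ∈ S, (-1:k)^j * F j from ?_,
        show ∀ S : Finset ℕ, ∀ F : ℕ → k, ∑ i ∈ S, (-1:k)^i * a * F i
        = a * ∑ i ∈ S, (-1:k)^i * F i from ?_, show ∀ S : Finset ℕ, ∀ F : ℕ → k,
          ∑ j ∈ S, a * (-1:k)^j * F j = a * ∑ j ∈ S, (-1:k)^j * F j from ?_]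
      · generalize ∑ i ∈ range (n+1), (-1:k)^i * V i (n+1) = S1
        generalize ∑ j ∈ range (n+1), (-1:k)^j * V (n+1) j = S2
        generalize ∑ i ∈ range (n+1), ∑ j ∈ range (n+1), (-1:k)^i * (-1:k)^j * V i j = S0
        linear_combination (u - t) * ha
      all_goals
        intro S F
        rw [Finset.mul_sum]
        exact Finset.sum_congr rfl fun i _ => by ring


section Main
variable {k : Type} [CommRing k] {G : Type} [Group G]




lemma extN_resN (N : ℕ) (F : ℕ → G) : ∀ m < N, extN N (resN N F) m = F m := by
  intro m hm
  simp [extN, resN, hm]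

noncomputable def sLin (τ : G) (n : ℕ) :
    ((Fin (n + 1) → G) → k) →ₗ[k] ((Fin n → G) → k) where
  toFun φ g := ∑ i ∈ range (n + 1), (-1 : k) ^ i • φ (resN (n + 1) (insN τ i (extN n g)))
  map_add' φ₁ φ₂ := by
    funext g
    simp [mul_add, Finset.sum_add_distrib]
  map_smul' r φ := by
    funext g
    simp only [smul_eq_mul, RingHom.id_apply, Pi.smul_apply, Finset.mul_sum]
    exact Finset.sum_congr rfl fun i _ => by ring

theorem key (τ : G) (n : ℕ) (φ : (Fin (n + 1) → G) → k) (g : Fin (n + 1) → G) :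
    φ (fun l => τ⁻¹ * g l * τ)
      = sLin (k := k) τ (n + 1)
          ((inhomogeneousCochains.d (Rep.trivial k G k) (n + 1)).hom φ) g
        + (show k from (inhomogeneousCochains.d (Rep.trivial k G k) n).hom (sLin (k := k) τ n φ) g)
        + φ g := by
  simp only [inhomogeneousCochains.d_hom_apply, sLin, LinearMap.coe_mk, AddHom.coe_mk,
    Representation.trivial_apply]
  set f := extN (n + 1) g with hf
  set T : ℕ → ℕ → k := fun i j => φ (resN (n + 1) (conN j (insN τ i f))) with hT
  set V : ℕ → ℕ → k := fun i j => φ (resN (n + 1) (insN τ i (conN j f))) with hV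
  set U : ℕ → k := fun i => φ (resN (n + 1) (insN τ i (fun m => f (m + 1)))) with hU
  -- Step 1: rewrite the first big sum
  have step1 : ∑ x ∈ Finset.range (n + 1 + 1),
      (-1 : k) ^ x •
        ((φ fun i => resN (n + 1 + 1) (insN τ x f) i.succ) +
          ∑ j : Fin (n + 1 + 1), (-1 : k) ^ ((j : ℕ) + 1) •
            φ (Fin.contractNth j (fun x1 x2 => x1 * x2) (resN (n + 1 + 1) (insN τ x f))))
      = ((∑ i ∈ Finset.range (n + 1), (-1 : k) ^ (i + 1) • U i) + (φ fun l => τ⁻¹ * g l * τ))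
        + ∑ x ∈ Finset.range (n + 2), ∑ j ∈ Finset.range (n + 2),
            (-1 : k) ^ x • ((-1 : k) ^ (j + 1) • T x j) := by
    have ecast : ∀ x : ℕ, ∑ j : Fin (n + 1 + 1), (-1 : k) ^ ((j : ℕ) + 1) •
        φ (Fin.contractNth j (fun x1 x2 => x1 * x2) (resN (n + 1 + 1) (insN τ x f)))
        = ∑ j ∈ Finset.range (n + 2), (-1 : k) ^ (j + 1) • T x j := by
      intro x
      rw [← Fin.sum_univ_eq_sum_range (fun j => (-1 : k) ^ (j + 1) • T x j) (n + 2)]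
      refine Finset.sum_congr rfl fun j _ => ?_
      have harg : Fin.contractNth j (fun x1 x2 => x1 * x2) (resN (n + 1 + 1) (insN τ x f))
          = resN (n + 1) (conN (j : ℕ) (insN τ x f)) := by
        rw [contract_eq (n + 1) _ j]
        exact resN_congr (conN_agree _ (extN_resN (n + 2) (insN τ x f)))
      rw [harg]
    simp_rw [ecast, smul_add, Finset.smul_sum]
    rw [Finset.sum_add_distrib]
    congr 1
    · -- tail terms
      rw [Finset.sum_range_succ' (fun x => (-1 : k) ^ x •
          (φ fun i => resN (n + 1 + 1) (insN τ x f) i.succ)) (n + 1)]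
      congr 1
      · refine Finset.sum_congr rfl fun i _ => ?_
        have harg : (fun l : Fin (n + 1) => resN (n + 1 + 1) (insN τ (i + 1) f) l.succ)
            = resN (n + 1) (insN τ i (fun m => f (m + 1))) := by
          funext l
          exact tail_insN_succ τ i f l
        rw [harg]
      · rw [pow_zero, one_smul]
        have harg : (fun l : Fin (n + 1) => resN (n + 1 + 1) (insN τ 0 f) l.succ)
            = (fun l : Fin (n + 1) => τ⁻¹ * g l * τ) := by
          funext l
          show insN τ 0 f ((l : ℕ) + 1) = τ⁻¹ * g l * τ
          rw [tail_insN_zero]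
          have : f (l : ℕ) = g l := by simp [hf, extN, l.isLt]
          rw [this]
        rw [harg]
  -- Step 2: rewrite the middle sum
  have step2 : ∑ i ∈ Finset.range (n + 1),
      (-1 : k) ^ i • φ (resN (n + 1) (insN τ i (extN n fun i => g i.succ)))
      = ∑ i ∈ Finset.range (n + 1), (-1 : k) ^ i • U i := by
    refine Finset.sum_congr rfl fun i hi => ?_
    have harg : resN (n + 1) (insN τ i (extN n fun i => g i.succ))
        = resN (n + 1) (insN τ i (fun m => f (m + 1))) := by
      refine resN_congr (insN_agree τ i (by have := Finset.mem_range.mp hi; omega) ?_)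
      intro m hm
      simp only [extN, hf, dif_pos hm, dif_pos (show m + 1 < n + 1 by omega)]
      congr 1
    rw [harg]
  -- Step 3: rewrite the last double sum
  have step3 : ∑ j : Fin (n + 1), (-1 : k) ^ ((j : ℕ) + 1) •
      ∑ i ∈ Finset.range (n + 1), (-1 : k) ^ i •
        φ (resN (n + 1) (insN τ i (extN n (Fin.contractNth j (fun x1 x2 => x1 * x2) g))))
      = ∑ j ∈ Finset.range (n + 1), (-1 : k) ^ (j + 1) •
          ∑ i ∈ Finset.range (n + 1), (-1 : k) ^ i • V i j := by
    rw [← Fin.sum_univ_eq_sum_range (fun j => (-1 : k) ^ (j + 1) •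
      ∑ i ∈ Finset.range (n + 1), (-1 : k) ^ i • V i j) (n + 1)]
    refine Finset.sum_congr rfl fun j _ => ?_
    congr 1
    refine Finset.sum_congr rfl fun i hi => ?_
    have harg : resN (n + 1) (insN τ i (extN n (Fin.contractNth j (fun x1 x2 => x1 * x2) g)))
        = resN (n + 1) (insN τ i (conN (j : ℕ) f)) := by
      refine resN_congr (insN_agree τ i (by have := Finset.mem_range.mp hi; omega) ?_)
      intro m hm
      rw [contract_eq n g j]
      exact extN_resN n _ m hm
    rw [harg]
  rw [step1, step2, step3]
  -- Step 4: the shuffle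
  have hlt : ∀ i j, j < i → i ≤ n → T (i + 1) j = V i j := by
    intro i j h1 _
    show φ _ = φ _
    rw [conN_insN_lt τ i j h1 f]
  have hgt : ∀ i j, i ≤ j → j ≤ n → T i (j + 1) = V i j := by
    intro i j h1 _
    show φ _ = φ _
    rw [conN_insN_gt τ i j h1 f]
  have hdiag : ∀ i, i ≤ n → T i i = T (i + 1) i := by
    intro i _
    show φ _ = φ _
    rw [conN_insN_diag τ i f]
  have hcorner : T (n + 1) (n + 1) = φ g := by
    show φ _ = φ _
    congr 1
    funext m
    show conN (n + 1) (insN τ (n + 1) f) (m : ℕ) = g m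
    rw [conN_insN_corner τ (n + 1) f m m.isLt]
    simp [hf, extN, m.isLt]
  have hs := shuffle n T V hlt hgt hdiag
  -- Step 5: final algebra
  have hTsum : ∑ x ∈ Finset.range (n + 2), ∑ j ∈ Finset.range (n + 2),
      (-1 : k) ^ x • ((-1 : k) ^ (j + 1) • T x j)
      = -∑ x ∈ Finset.range (n + 2), ∑ j ∈ Finset.range (n + 2),
          (-1 : k) ^ x * (-1 : k) ^ j * T x j := by
    rw [← Finset.sum_neg_distrib]
    refine Finset.sum_congr rfl fun x _ => ?_
    rw [← Finset.sum_neg_distrib]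
    refine Finset.sum_congr rfl fun j _ => ?_
    simp only [smul_eq_mul, pow_succ]
    ring
  have hVsum : ∑ j ∈ Finset.range (n + 1), (-1 : k) ^ (j + 1) •
      ∑ i ∈ Finset.range (n + 1), (-1 : k) ^ i • V i j
      = -∑ i ∈ Finset.range (n + 1), ∑ j ∈ Finset.range (n + 1),
          (-1 : k) ^ i * (-1 : k) ^ j * V i j := by
    have h1 : ∑ j ∈ Finset.range (n + 1), (-1 : k) ^ (j + 1) •
        ∑ i ∈ Finset.range (n + 1), (-1 : k) ^ i • V i j
        = ∑ j ∈ Finset.range (n + 1), ∑ i ∈ Finset.range (n + 1),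
            -((-1 : k) ^ i * (-1 : k) ^ j * V i j) := by
      refine Finset.sum_congr rfl fun j _ => ?_
      rw [Finset.smul_sum]
      refine Finset.sum_congr rfl fun i _ => ?_
      simp only [smul_eq_mul, pow_succ]
      ring
    rw [h1, Finset.sum_comm]
    simp [Finset.sum_neg_distrib]
  have hUsum : ∑ i ∈ Finset.range (n + 1), (-1 : k) ^ (i + 1) • U i
      = -∑ i ∈ Finset.range (n + 1), (-1 : k) ^ i • U i := by
    rw [← Finset.sum_neg_distrib]
    refine Finset.sum_congr rfl fun i _ => ?_
    simp only [smul_eq_mul, pow_succ]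
    ring
  rw [hTsum, hVsum, hUsum, hs, hcorner]
  ring

theorem key0 (τ : G) (φ : (Fin 0 → G) → k) (g : Fin 0 → G) :
    φ (fun l => τ⁻¹ * g l * τ)
      = sLin (k := k) τ 0 ((inhomogeneousCochains.d (Rep.trivial k G k) 0).hom φ) g + 0 + φ g := by
  have e : ∀ h : Fin 0 → G, φ h = φ g := fun h => congrArg φ (Subsingleton.elim h g)
  simp [sLin, inhomogeneousCochains.d_hom_apply, Representation.trivial_apply, e]

end Main

section Homotopy

variable {k : Type} [CommRing k]

variable {G : Type} [Group G]

/-- Conjugation by `τ`: `g ↦ τ⁻¹ * g * τ`. -/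
def conjHom (τ : G) : G →* G where
  toFun g := τ⁻¹ * g * τ
  map_one' := by group
  map_mul' x y := by group

noncomputable def sHom (τ : G) (j : ℕ) :
    (inhomogeneousCochains (Rep.trivial k G k)).X (j + 1) ⟶
      (inhomogeneousCochains (Rep.trivial k G k)).X j :=
  ModuleCat.ofHom (sLin (k := k) τ j)

noncomputable def conjHomotopy (τ : G) :
    Homotopy (trivialCochainsMap (k := k) (conjHom τ))
      (𝟙 (inhomogeneousCochains (Rep.trivial k G k))) where
  hom i j := if h : j + 1 = i then
    (CategoryTheory.eqToHom (by rw [← h]) :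
        (inhomogeneousCochains (Rep.trivial k G k)).X i ⟶ _) ≫ sHom τ j
    else 0
  zero i j h := dif_neg h
  comm i := by
    rcases i with _ | n
    · rw [dNext_eq _ (show (ComplexShape.up ℕ).Rel 0 1 from rfl),
        prevD_eq_zero _ 0 (by simp)]
      refine ModuleCat.hom_ext (LinearMap.ext fun φ => ?_)
      funext (g : Fin 0 → G)
      simp only [dif_pos rfl, CategoryTheory.eqToHom_refl, CategoryTheory.Category.id_comp,
        HomologicalComplex.id_f, inhomogeneousCochains.d_def, ModuleCat.hom_comp,
        ModuleCat.hom_add, ModuleCat.hom_zero, sHom, ModuleCat.hom_ofHom,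
        LinearMap.comp_apply, LinearMap.add_apply, LinearMap.zero_apply, Pi.add_apply,
        Pi.zero_apply, ModuleCat.id_apply, id_eq]
      exact key0 (k := k) τ φ g
    · rw [dNext_eq _ (show (ComplexShape.up ℕ).Rel (n + 1) (n + 2) from rfl),
        prevD_eq _ (show (ComplexShape.up ℕ).Rel n (n + 1) from rfl)]
      refine ModuleCat.hom_ext (LinearMap.ext fun φ => ?_)
      funext (g : Fin (n + 1) → G)
      simp only [dif_pos rfl, CategoryTheory.eqToHom_refl, CategoryTheory.Category.id_comp,
        HomologicalComplex.id_f, inhomogeneousCochains.d_def, ModuleCat.hom_comp,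
        ModuleCat.hom_add, sHom, ModuleCat.hom_ofHom, LinearMap.comp_apply, LinearMap.add_apply, Pi.add_apply, ModuleCat.id_apply, id_eq]
      rw [CochainComplex.of_d]
      erw [CochainComplex.of_d _ _ (n + 1)]
      exact key (k := k) τ n φ g

lemma conj_homologyMap (τ : G) (n : ℕ) :
    HomologicalComplex.homologyMap (trivialCochainsMap (k := k) (conjHom τ)) n
      = 𝟙 _ := by
  rw [(conjHomotopy (k := k) τ).homologyMap_eq n, HomologicalComplex.homologyMap_id]

lemma trivialCochainsMap_comp {G H K' : Type} [Group G] [Group H] [Group K']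
    (f : H →* G) (e : K' →* H) :
    trivialCochainsMap (k := k) (f.comp e)
      = trivialCochainsMap (k := k) f ≫ trivialCochainsMap (k := k) e := by
  ext n : 2
  rfl

end Homotopy

section Cayley

variable {P : Type} [Group P] [Finite P] {Q : Subgroup P}

/-- Two free actions of `Q` on `P`: via `ψ` and via the inclusion; they are conjugate
in `Equiv.Perm P`. -/
lemma exists_conj (ψ : Q →* P) (hψ : Function.Injective ψ) :
    ∃ σ : Equiv.Perm P, ∀ q : Q,
      (MulAction.toPermHom P P) (ψ q)
        = σ * (MulAction.toPermHom P P) ((Q.subtype) q) * σ⁻¹ := by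
  classical
  -- setoids of orbits for the two actions
  let r₁ : Setoid P := ⟨fun x y => ∃ q : Q, (q : P) * x = y,
    ⟨fun x => ⟨1, by simp⟩, by
      rintro x y ⟨q, rfl⟩; exact ⟨q⁻¹, by simp [← mul_assoc]⟩, by
      rintro x y z ⟨q, rfl⟩ ⟨q', rfl⟩; exact ⟨q' * q, by simp [mul_assoc]⟩⟩⟩
  let r₂ : Setoid P := ⟨fun x y => ∃ q : Q, ψ q * x = y,
    ⟨fun x => ⟨1, by simp⟩, by
      rintro x y ⟨q, rfl⟩; exact ⟨q⁻¹, by simp [← mul_assoc]⟩, by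
      rintro x y z ⟨q, rfl⟩ ⟨q', rfl⟩; exact ⟨q' * q, by simp [mul_assoc]⟩⟩⟩
  let F₁ : Q × Quotient r₁ → P := fun p => (p.1 : P) * p.2.out
  let F₂ : Q × Quotient r₂ → P := fun p => ψ p.1 * p.2.out
  have hF₁ : Function.Bijective F₁ := by
    constructor
    · rintro ⟨q, ω⟩ ⟨q', ω'⟩ h
      have hω : ω = ω' := by
        have : r₁.r ω.out ω'.out := ⟨q'⁻¹ * q, by
          simp only [Subgroup.coe_mul]
          rw [mul_assoc]
          simp only [F₁] at h
          rw [h]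
          simp [← mul_assoc]⟩
        calc ω = ⟦ω.out⟧ := (Quotient.out_eq ω).symm
          _ = ⟦ω'.out⟧ := Quotient.sound this
          _ = ω' := Quotient.out_eq ω'
      subst hω
      have : (q : P) = q' :=
        mul_right_cancel (show (q : P) * ω.out = (q' : P) * ω.out from h)
      exact Prod.ext (Subtype.ext this) rfl
    · intro x
      obtain ⟨q, hq⟩ : r₁.r (⟦x⟧ : Quotient r₁).out x := Quotient.mk_out x
      exact ⟨⟨q, ⟦x⟧⟩, hq⟩
  have hF₂ : Function.Bijective F₂ := by
    constructor
    · rintro ⟨q, ω⟩ ⟨q', ω'⟩ h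
      have hω : ω = ω' := by
        have : r₂.r ω.out ω'.out := ⟨q'⁻¹ * q, by
          simp only [map_mul]
          rw [mul_assoc]
          simp only [F₂] at h
          rw [h]
          simp [← mul_assoc]⟩
        calc ω = ⟦ω.out⟧ := (Quotient.out_eq ω).symm
          _ = ⟦ω'.out⟧ := Quotient.sound this
          _ = ω' := Quotient.out_eq ω'
      subst hω
      have : ψ q = ψ q' :=
        mul_right_cancel (show ψ q * ω.out = ψ q' * ω.out from h)
      exact Prod.ext (hψ this) rfl
    · intro x
      obtain ⟨q, hq⟩ : r₂.r (⟦x⟧ : Quotient r₂).out x := Quotient.mk_out x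
      exact ⟨⟨q, ⟦x⟧⟩, hq⟩
  -- the two orbit spaces have the same cardinality
  have hcard : Nat.card (Quotient r₁) = Nat.card (Quotient r₂) := by
    have h1 : Nat.card Q * Nat.card (Quotient r₁) = Nat.card P := by
      rw [← Nat.card_prod]; exact Nat.card_eq_of_bijective F₁ hF₁
    have h2 : Nat.card Q * Nat.card (Quotient r₂) = Nat.card P := by
      rw [← Nat.card_prod]; exact Nat.card_eq_of_bijective F₂ hF₂
    have hQ : Nat.card Q ≠ 0 := Nat.card_ne_zero.mpr ⟨⟨1⟩, inferInstance⟩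
    exact Nat.eq_of_mul_eq_mul_left (Nat.pos_of_ne_zero hQ) (h1.trans h2.symm)
  have : Finite (Quotient r₁) := Quotient.finite _
  have : Finite (Quotient r₂) := Quotient.finite _
  obtain ⟨e⟩ := Finite.card_eq.mp hcard
  let E₁ := Equiv.ofBijective F₁ hF₁
  let E₂ := Equiv.ofBijective F₂ hF₂
  let σ : Equiv.Perm P := E₁.symm.trans ((Equiv.prodCongr (Equiv.refl Q) e).trans E₂)
  have hσF : ∀ p : Q × Quotient r₁, σ (F₁ p) = F₂ (p.1, e p.2) := by
    intro p
    show E₂ ((Equiv.prodCongr (Equiv.refl Q) e) (E₁.symm (E₁ p))) = _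
    rw [Equiv.symm_apply_apply]
    rfl
  have hkey : ∀ (q : Q) (y : P), σ ((q : P) * y) = ψ q * σ y := by
    intro q y
    have hy : F₁ (E₁.symm y) = y := E₁.apply_symm_apply y
    rw [← hy]
    have h1 : (q : P) * F₁ (E₁.symm y) = F₁ (q * (E₁.symm y).1, (E₁.symm y).2) := by
      simp [F₁, mul_assoc]
    rw [h1, hσF, hσF]
    show F₂ (q * (E₁.symm y).1, e (E₁.symm y).2) = ψ q * F₂ ((E₁.symm y).1, e (E₁.symm y).2)
    simp [F₂, map_mul, mul_assoc]
  refine ⟨σ, fun q => ?_⟩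
  ext x
  simp only [Equiv.Perm.coe_mul, Function.comp_apply, MulAction.toPermHom_apply,
    MulAction.toPerm_apply, smul_eq_mul]
  show ψ q * x = σ ((q : P) * σ⁻¹ x)
  rw [hkey q (σ⁻¹ x), ← Equiv.Perm.mul_apply, mul_inv_cancel, Equiv.Perm.one_apply]

end Cayley

section Assemble

variable {k : Type} [CommRing k]

lemma cohomologyRes_comp {G H K' : Type} [Group G] [Group H] [Group K']
    (f : H →* G) (e : K' →* H) (n : ℕ)
    (x : groupCohomology (Rep.trivial k G k) n) :
    cohomologyRes (k := k) e n (cohomologyRes (k := k) f n x)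
      = cohomologyRes (k := k) (f.comp e) n x := by
  rw [cohomologyRes, cohomologyRes, cohomologyRes, trivialCochainsMap_comp,
    HomologicalComplex.homologyMap_comp]
  rfl

lemma cohomologyRes_conj {G : Type} [Group G] (τ : G) (n : ℕ)
    (x : groupCohomology (Rep.trivial k G k) n) :
    cohomologyRes (k := k) (conjHom τ) n x = x := by
  rw [cohomologyRes, conj_homologyMap]
  rfl

theorem main (p : ℕ) (hp : p.Prime) (P : Type) [Group P] [Finite P]
    (hP : IsPGroup p P) (n : ℕ)
    (x : groupCohomology (Rep.trivial (ZMod p) (Equiv.Perm P) (ZMod p)) n)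
    (Q : Subgroup P) (ψ : Q →* P) (hψ : Function.Injective ψ) :
    cohomologyRes ψ n (cohomologyRes (MulAction.toPermHom P P) n x)
      = cohomologyRes Q.subtype n (cohomologyRes (MulAction.toPermHom P P) n x) := by
  obtain ⟨σ, hσ⟩ := exists_conj ψ hψ
  set ι := MulAction.toPermHom P P with hι
  have hcomp : ι.comp ψ = (conjHom σ⁻¹).comp (ι.comp Q.subtype) := by
    refine MonoidHom.ext fun q => ?_
    show ι (ψ q) = (σ⁻¹)⁻¹ * ι (Q.subtype q) * σ⁻¹
    rw [inv_inv]
    exact hσ q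
  rw [cohomologyRes_comp ι ψ n x, hcomp,
    ← cohomologyRes_comp (conjHom σ⁻¹) (ι.comp Q.subtype) n x,
    cohomologyRes_conj σ⁻¹ n x, cohomologyRes_comp ι Q.subtype n x]

end Assemble

end LSYAux

/-- **Theorem 3 of Leary–Schuster–Yagita** (mod-p version).
Let `P` be a finite `p`-group, `G = Sym(P)` the symmetric group on the underlying
set of `P`, with `P ≤ G` via the Cayley embedding `i_P`.  Every class in the image
of `i_P^* : Hⁿ(G; 𝔽_p) → Hⁿ(P; 𝔽_p)` is universally stable: for every subgroup
`Q ≤ P` and injective homomorphism `ψ : Q → P`, `ψ^*` and `Res^P_Q` agree on it. -/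
theorem stmt_2 (p : ℕ) (hp : p.Prime) (P : Type) [Group P] [Finite P]
    (hP : IsPGroup p P) (n : ℕ)
    (x : groupCohomology (Rep.trivial (ZMod p) (Equiv.Perm P) (ZMod p)) n)
    (Q : Subgroup P) (ψ : Q →* P) (hψ : Function.Injective ψ) :
    cohomologyRes ψ n (cohomologyRes (MulAction.toPermHom P P) n x)
      = cohomologyRes Q.subtype n (cohomologyRes (MulAction.toPermHom P P) n x) := by
  obtain ⟨σ, hσ⟩ := LSYAux.exists_conj ψ hψ
  set ι := MulAction.toPermHom P P with hι
  have hcomp : ι.comp ψ = (LSYAux.conjHom σ⁻¹).comp (ι.comp Q.subtype) := by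
    refine MonoidHom.ext fun q => ?_
    show ι (ψ q) = (σ⁻¹)⁻¹ * ι (Q.subtype q) * σ⁻¹
    rw [inv_inv]
    exact hσ q
  rw [LSYAux.cohomologyRes_comp ι ψ n x, hcomp,
    ← LSYAux.cohomologyRes_comp (LSYAux.conjHom σ⁻¹) (ι.comp Q.subtype) n x,
    LSYAux.cohomologyRes_conj σ⁻¹ n x, LSYAux.cohomologyRes_comp ι Q.subtype n x]
end
end

section
/- Let T be a simple graph which is a tree (connected and acyclic), let Γ be a group acting on T by graph automorphisms in such a way that no element of Γ reverses an edge (i.e. for no γ ∈ Γ and adjacent vertices v, w does γ·v = w and γ·w = v), and suppose there is a positive integer M such that the stabilizer in Γ of every vertex of T is finite of order dividing M. Then there exists a group homomorphism f from Γ to the symmetric group on M letters whose kernel K is torsion-free; moreover K is a free group. -/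
open SimpleGraph

namespace Stmt5

variable {V : Type} {T : SimpleGraph V}

/-! ### Labelled walks -/

section Labels

variable {X : Type} [Group X]

/-- The product of edge labels along a walk (later edges multiplied on the left). -/
def wlabel (ℓ : ∀ ⦃v w : V⦄, T.Adj v w → X) : ∀ {v w : V}, T.Walk v w → X
  | _, _, .nil => 1
  | _, _, .cons h p => wlabel ℓ p * ℓ h

variable (ℓ : ∀ ⦃v w : V⦄, T.Adj v w → X)

@[simp] lemma wlabel_nil {v : V} : wlabel ℓ (Walk.nil : T.Walk v v) = 1 := rfl

@[simp] lemma wlabel_cons {v u w : V} (h : T.Adj v u) (p : T.Walk u w) :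
    wlabel ℓ (Walk.cons h p) = wlabel ℓ p * ℓ h := rfl

lemma wlabel_append : ∀ {v w u : V} (p : T.Walk v w) (q : T.Walk w u),
    wlabel ℓ (p.append q) = wlabel ℓ q * wlabel ℓ p
  | _, _, _, .nil, q => by simp
  | _, _, _, .cons h p, q => by
      simp [Walk.cons_append, wlabel_append p q, mul_assoc]

/-- Unique path between two vertices in a tree. -/
noncomputable def pb (hT : T.IsTree) (v w : V) : T.Walk v w :=
  (hT.existsUnique_path v w).exists.choose

lemma pb_isPath (hT : T.IsTree) (v w : V) : (pb hT v w).IsPath :=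
  (hT.existsUnique_path v w).exists.choose_spec

lemma pb_unique (hT : T.IsTree) {v w : V} {p : T.Walk v w} (hp : p.IsPath) :
    p = pb hT v w :=
  ((hT.existsUnique_path v w).unique hp (pb_isPath hT v w))

@[simp] lemma pb_self (hT : T.IsTree) (v : V) : pb hT v v = Walk.nil :=
  (pb_unique hT (Walk.IsPath.nil)).symm

lemma pb_length_le (hT : T.IsTree) {v w : V} (p : T.Walk v w) :
    (pb hT v w).length ≤ p.length := by
  classical
  have h := pb_unique hT p.bypass_isPath
  calc (pb hT v w).length = p.bypass.length := by rw [← h]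
    _ ≤ p.length := p.length_bypass_le

/-- In a tree, a path between adjacent vertices is the single edge. -/
lemma path_of_adj (hT : T.IsTree) {v w : V} (h : T.Adj v w) {p : T.Walk v w}
    (hp : p.IsPath) : p = Walk.cons h Walk.nil := by
  have h1 : (Walk.cons h (Walk.nil : T.Walk w w)).IsPath := by
    simp [Walk.cons_isPath_iff, h.ne]
  exact (hT.existsUnique_path v w).unique hp h1

/-- Label of the unique path. -/
noncomputable def plabel (hT : T.IsTree) (v w : V) : X := wlabel ℓ (pb hT v w)

lemma plabel_cons (hsymm : ∀ ⦃v w : V⦄ (h : T.Adj v w), ℓ h.symm = (ℓ h)⁻¹) (hT : T.IsTree) {v u : V} (h : T.Adj v u) (w : V) :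
    plabel ℓ hT v w = plabel ℓ hT u w * ℓ h := by
  classical
  set P := pb hT u w with hP
  by_cases hv : v ∈ P.support
  · have htake : P.takeUntil v hv = Walk.cons h.symm Walk.nil :=
      path_of_adj hT h.symm ((pb_isPath hT u w).takeUntil hv)
    have hdrop : (P.dropUntil v hv).IsPath := (pb_isPath hT u w).dropUntil hv
    have hsplit := P.take_spec hv
    have hPw : pb hT v w = P.dropUntil v hv := (pb_unique hT hdrop).symm
    have : wlabel ℓ P = wlabel ℓ (P.dropUntil v hv) * (ℓ h)⁻¹ := by
      conv_lhs => rw [← hsplit]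
      rw [wlabel_append, htake]
      simp [hsymm h]
    rw [plabel, plabel, ← hP, this, hPw]
    group
  · have hcons : (Walk.cons h P).IsPath :=
      Walk.IsPath.cons (pb_isPath hT u w) hv
    have : pb hT v w = Walk.cons h P := (pb_unique hT hcons).symm
    rw [plabel, this, wlabel_cons, plabel]

/-- In a tree every walk has the same label as the unique path. -/
lemma wlabel_eq_plabel (hsymm : ∀ ⦃v w : V⦄ (h : T.Adj v w), ℓ h.symm = (ℓ h)⁻¹) (hT : T.IsTree) :
    ∀ {v w : V} (p : T.Walk v w), wlabel ℓ p = plabel ℓ hT v w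
  | _, _, .nil => by simp [plabel]
  | _, _, .cons h p => by
      rw [wlabel_cons, wlabel_eq_plabel hsymm hT p, ← plabel_cons ℓ hsymm hT h]

@[simp] lemma plabel_self (hT : T.IsTree) (v : V) : plabel ℓ hT v v = (1 : X) := by
  simp [plabel]

lemma plabel_trans (hsymm : ∀ ⦃v w : V⦄ (h : T.Adj v w), ℓ h.symm = (ℓ h)⁻¹) (hT : T.IsTree) (v w u : V) :
    plabel ℓ hT w u * plabel ℓ hT v w = plabel ℓ hT v u := by
  have := wlabel_eq_plabel ℓ hsymm hT ((pb hT v w).append (pb hT w u))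
  rw [wlabel_append] at this
  rw [← this, plabel, plabel]

lemma plabel_symm (hsymm : ∀ ⦃v w : V⦄ (h : T.Adj v w), ℓ h.symm = (ℓ h)⁻¹) (hT : T.IsTree) (v w : V) :
    plabel ℓ hT w v = (plabel ℓ hT v w)⁻¹ := by
  have := plabel_trans ℓ hsymm hT v w v
  rw [plabel_self] at this
  exact eq_inv_of_mul_eq_one_left this

/-- Label of a mapped walk, when labels transform by a cocycle-type rule. -/
lemma wlabel_map (hT : T.IsTree) (φ : T →g T) (a : V → X)
    (hA : ∀ ⦃v w : V⦄ (h : T.Adj v w), ℓ (φ.map_adj h) = a w * ℓ h * (a v)⁻¹) :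
    ∀ {v w : V} (p : T.Walk v w), wlabel ℓ (p.map φ) = a w * wlabel ℓ p * (a v)⁻¹
  | _, _, .nil => by simp
  | _, _, .cons h p => by
      rw [Walk.map_cons, wlabel_cons, wlabel_map hT φ a hA p, hA h, wlabel_cons]
      group

end Labels

/-! ### Non-backtracking walks -/

section Nobk

/-- A walk is non-backtracking if no vertex equals the vertex two steps later. -/
def Nobk {v w : V} (p : T.Walk v w) : Prop :=
  ∀ i, i + 2 ≤ p.length → p.getVert i ≠ p.getVert (i + 2)

lemma nobk_nil {v : V} : Nobk (Walk.nil : T.Walk v v) := by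
  intro i hi; simp at hi

lemma nobk_cons_tail {v u w : V} {h : T.Adj v u} {q : T.Walk u w}
    (hn : Nobk (Walk.cons h q)) : Nobk q := by
  intro i hi
  have := hn (i + 1) (by simp [Walk.length_cons]; omega)
  simpa [Walk.getVert_cons_succ] using this

lemma getVert_mem_support {v w : V} (p : T.Walk v w) (i : ℕ) :
    p.getVert i ∈ p.support := by
  induction p generalizing i with
  | nil => simp [Walk.getVert]
  | cons h q ih =>
    cases i with
    | zero => simp
    | succ n => simp [Walk.getVert_cons_succ]

lemma isPath_getVert_ne {v w : V} {p : T.Walk v w} (hp : p.IsPath) :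
    ∀ i j, i < j → j ≤ p.length → p.getVert i ≠ p.getVert j := by
  induction p with
  | nil => intro i j hij hj; simp at hj; omega
  | cons h q ih =>
    intro i j hij hj heq
    rw [Walk.cons_isPath_iff] at hp
    cases i with
    | zero =>
      rw [Walk.getVert_zero] at heq
      rw [Walk.getVert_cons _ _ (by omega)] at heq
      exact hp.2 (heq ▸ getVert_mem_support q (j - 1))
    | succ n =>
      rw [Walk.getVert_cons_succ, Walk.getVert_cons _ _ (by omega)] at heq
      have hj1 : j - 1 ≤ q.length := by simp [Walk.length_cons] at hj; omega
      exact ih hp.1 n (j-1) (by omega) hj1 heq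

lemma isPath_nobk {v w : V} {p : T.Walk v w} (hp : p.IsPath) : Nobk p :=
  fun i hi => isPath_getVert_ne hp i (i+2) (by omega) hi

lemma nobk_isPath (hT : T.IsTree) : ∀ {v w : V} (p : T.Walk v w), Nobk p → p.IsPath
  | _, _, .nil, _ => Walk.IsPath.nil
  | v, w, .cons h q, hn => by
    classical
    have hq : q.IsPath := nobk_isPath hT q (nobk_cons_tail hn)
    by_cases hv : v ∈ q.support
    · exfalso
      have htake : q.takeUntil v hv = Walk.cons h.symm Walk.nil :=
        path_of_adj hT h.symm (hq.takeUntil hv)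
      have hsplit := q.take_spec hv
      rw [htake] at hsplit
      simp only [Walk.cons_append, Walk.nil_append] at hsplit
      have hlen : 1 ≤ q.length := by
        rw [← hsplit]; simp [Walk.length_cons]
      have h1 : q.getVert 1 = v := by
        rw [← hsplit, Walk.getVert_cons_succ, Walk.getVert_zero]
      exact hn 0 (by simp [Walk.length_cons]; omega)
        (by simpa [Walk.getVert_zero, Walk.getVert_cons_succ, h1])
    · exact hq.cons hv

lemma nobk_append {v w u : V} (p : T.Walk v w) (q : T.Walk w u)
    (hp : Nobk p) (hq : Nobk q)
    (hseam : 1 ≤ p.length → 1 ≤ q.length → p.getVert (p.length - 1) ≠ q.getVert 1) :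
    Nobk (p.append q) := by
  intro i hi
  rw [Walk.length_append] at hi
  rw [Walk.getVert_append, Walk.getVert_append]
  split_ifs with h1 h2
  · exact hp i h2.le
  · -- i < p.length ≤ i + 2
    rcases Nat.lt_or_ge (i+1) p.length with hc | hc
    · -- p.length = i + 2
      have hieq : p.length = i + 2 := by omega
      have : q.getVert (i + 2 - p.length) = p.getVert (i+2) := by
        rw [hieq, show i + 2 - (i+2) = 0 from by omega, Walk.getVert_zero, ← hieq,
          Walk.getVert_length]
      rw [this]
      exact hp i hieq.ge
    · -- p.length = i + 1
      have hieq : p.length = i + 1 := by omega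
      have hq1 : 1 ≤ q.length := by omega
      have : i + 2 - p.length = 1 := by omega
      rw [this]
      have : p.getVert i = p.getVert (p.length - 1) := by rw [hieq]; simp
      rw [this]
      exact hseam (by omega) hq1
  · intro heq
    have h3 : i ≥ p.length := by omega
    omega
  · have h3 : i ≥ p.length := by omega
    have : i + 2 - p.length = (i - p.length) + 2 := by omega
    rw [this]
    exact hq (i - p.length) (by omega)

lemma getVert_map (φ : T →g T) {v w : V} (p : T.Walk v w) (i : ℕ) :
    (p.map φ).getVert i = φ (p.getVert i) := by
  induction p generalizing i with
  | nil => simp [Walk.getVert]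
  | cons h q ih =>
    cases i with
    | zero => simp
    | succ n => simp [Walk.map_cons, Walk.getVert_cons_succ, ih]

lemma nobk_map (φ : T →g T) (hinj : Function.Injective φ) {v w : V} {p : T.Walk v w}
    (hp : Nobk p) : Nobk (p.map φ) := by
  intro i hi
  rw [Walk.length_map] at hi
  rw [getVert_map, getVert_map]
  exact fun heq => hp i hi (hinj heq)

lemma nobk_copy {v w v' w' : V} (p : T.Walk v w) (hv : v = v') (hw : w = w')
    (hp : Nobk p) : Nobk (p.copy hv hw) := by
  subst hv; subst hw; simpa [Walk.copy] using hp

end Nobk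

/-! ### Fixed points of torsion elements -/

section FixedPoint

variable {Γ : Type} [Group Γ] [MulAction Γ V]

/-- The graph homomorphism given by the action of `γ`. -/
def gHom (hadj : ∀ (γ : Γ) (v w : V), T.Adj v w → T.Adj (γ • v) (γ • w)) (γ : Γ) :
    T →g T :=
  ⟨fun v => γ • v, fun {a b} h => hadj γ a b h⟩

@[simp] lemma gHom_apply (hadj : ∀ (γ : Γ) (v w : V), T.Adj v w → T.Adj (γ • v) (γ • w))
    (γ : Γ) (v : V) : gHom hadj γ v = γ • v := rfl

lemma closed_path_length {v : V} {p : T.Walk v v} (hp : p.IsPath) : p.length = 0 := by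
  cases p with
  | nil => rfl
  | cons h q =>
    rw [Walk.cons_isPath_iff] at hp
    exact absurd q.end_mem_support hp.2

/-- Iterated concatenation `p · φ(p) · φ²(p) ⋯`. -/
def iterWalk (φ : T →g T) {v : V} (p : T.Walk v (φ v)) : ∀ n : ℕ, T.Walk v (φ^[n] v)
  | 0 => Walk.nil.copy rfl (by simp)
  | n+1 => (p.append ((iterWalk φ p n).map φ)).copy rfl
      (by rw [Function.iterate_succ_apply'])

lemma iterWalk_length (φ : T →g T) {v : V} (p : T.Walk v (φ v)) (n : ℕ) :
    (iterWalk φ p n).length = n * p.length := by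
  induction n with
  | zero => simp [iterWalk]
  | succ n ih =>
    rw [iterWalk, Walk.length_copy, Walk.length_append, Walk.length_map, ih]
    ring

lemma getVert_one_append {v w u : V} (p : T.Walk v w) (q : T.Walk w u)
    (hp : 1 ≤ p.length) : (p.append q).getVert 1 = p.getVert 1 := by
  rw [Walk.getVert_append]
  split_ifs with h
  · rfl
  · have hieq : p.length = 1 := by omega
    rw [show 1 - p.length = 0 from by omega, Walk.getVert_zero, ← hieq, Walk.getVert_length]

lemma iterWalk_getVert_one (φ : T →g T) {v : V} (p : T.Walk v (φ v))
    (hp : 1 ≤ p.length) (n : ℕ) (hn : 1 ≤ n) :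
    (iterWalk φ p n).getVert 1 = p.getVert 1 := by
  cases n with
  | zero => omega
  | succ n => rw [iterWalk, Walk.getVert_copy, getVert_one_append _ _ hp]

lemma iterWalk_nobk (φ : T →g T) (hinj : Function.Injective φ) {v : V}
    (p : T.Walk v (φ v)) (hp : Nobk p) (hp1 : 1 ≤ p.length)
    (hseam : p.getVert (p.length - 1) ≠ φ (p.getVert 1)) (n : ℕ) :
    Nobk (iterWalk φ p n) := by
  induction n with
  | zero => exact nobk_copy _ _ _ nobk_nil
  | succ n ih =>
    refine nobk_copy _ _ _ (nobk_append _ _ hp (nobk_map φ hinj ih) ?_)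
    intro _ hq
    rw [Walk.length_map, iterWalk_length] at hq
    have hn : 1 ≤ n := by by_contra hc; simp at hc; subst hc; simp at hq
    rw [getVert_map, iterWalk_getVert_one φ p hp1 n hn]
    exact hseam

lemma iterate_smul_eq (hadj : ∀ (γ : Γ) (v w : V), T.Adj v w → T.Adj (γ • v) (γ • w))
    (γ : Γ) (n : ℕ) (v : V) : (gHom hadj γ)^[n] v = γ ^ n • v := by
  induction n with
  | zero => simp
  | succ n ih =>
    rw [Function.iterate_succ_apply', ih, gHom_apply, ← mul_smul, ← pow_succ']

/-- A finite order element of a group acting on a tree without edge inversions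
fixes a vertex. -/
lemma exists_fixed_point (hT : T.IsTree)
    (hadj : ∀ (γ : Γ) (v w : V), T.Adj v w → T.Adj (γ • v) (γ • w))
    (hninv : ∀ (γ : Γ) (v w : V), T.Adj v w → ¬(γ • v = w ∧ γ • w = v))
    (γ : Γ) (hfin : IsOfFinOrder γ) : ∃ v : V, γ • v = v := by
  classical
  by_contra hno
  push_neg at hno
  haveI : Nonempty V := hT.isConnected.nonempty
  set f : V → ℕ := fun v => (pb hT v (γ • v)).length with hf
  have hne : (Set.range f).Nonempty := ⟨f (Classical.arbitrary V), ⟨_, rfl⟩⟩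
  obtain ⟨v₀, hv₀⟩ := Nat.sInf_mem hne
  have hmin : ∀ u : V, sInf (Set.range f) ≤ f u := fun u => Nat.sInf_le ⟨u, rfl⟩
  set p : T.Walk v₀ (γ • v₀) := pb hT v₀ (γ • v₀) with hpdef
  set d : ℕ := p.length with hd
  have hdeq : d = sInf (Set.range f) := by rw [hd, ← hv₀]
  have hd1 : 1 ≤ d := by
    rcases Nat.eq_zero_or_pos d with h0 | h
    · exfalso
      have := p.getVert_length
      rw [← hd, h0, Walk.getVert_zero] at this
      exact hno v₀ this.symm
    · exact h
  have hclaim : p.getVert (p.length - 1) ≠ (gHom hadj γ) (p.getVert 1) := by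
    intro heq
    rw [gHom_apply] at heq
    by_cases hD : d = 1
    · have h1 : p.getVert 1 = γ • v₀ := by
        rw [show (1:ℕ) = p.length from by omega, Walk.getVert_length]
      have h0 : p.getVert (p.length - 1) = v₀ := by
        rw [show p.length - 1 = 0 from by omega, Walk.getVert_zero]
      have hadj01 : T.Adj v₀ (γ • v₀) := by
        have := p.adj_getVert_succ (i := 0) (by omega)
        rwa [Walk.getVert_zero, h1] at this
      exact hninv γ v₀ (γ • v₀) hadj01 ⟨rfl, by rw [← h1, ← heq, h0]⟩
    · have hD2 : 2 ≤ d := by omega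
      have hnp : ¬p.Nil := by rw [Walk.nil_iff_length_eq]; omega
      set r := p.tail.reverse with hr
      have hrlen : r.length = d - 1 := by
        rw [hr, Walk.length_reverse]
        have := Walk.length_tail_add_one hnp
        omega
      have hnr : ¬r.Nil := by rw [Walk.nil_iff_length_eq]; omega
      set q := r.tail.reverse with hq
      have hqlen : q.length = d - 2 := by
        rw [hq, Walk.length_reverse]
        have := Walk.length_tail_add_one hnr
        omega
      -- r : Walk (γ • v₀) (p.tail-start...)
      have hr1 : r.getVert 1 = p.getVert (d - 1) := by
        rw [hr, Walk.getVert_reverse, Walk.getVert_tail]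
        congr 1
        have := Walk.length_tail_add_one hnp
        omega
      -- q is a walk from (p.getVert 1) to (r.getVert 1)
      have : f (p.getVert 1) ≤ d - 2 := by
        rw [hf]
        have hcopy : r.getVert 1 = γ • p.getVert 1 := by rw [hr1, ← heq]
        calc (pb hT (p.getVert 1) (γ • p.getVert 1)).length
            ≤ (q.copy rfl hcopy).length := pb_length_le hT _
          _ = d - 2 := by rw [Walk.length_copy, hqlen]
      have := hmin (p.getVert 1)
      omega
  -- build the iterated walk
  set n := orderOf γ with hn
  have hnpos : 0 < n := hfin.orderOf_pos
  have hW := iterWalk_nobk (gHom hadj γ) (MulAction.injective γ) p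
    (isPath_nobk (pb_isPath hT _ _)) hd1 hclaim n
  have hend : (gHom hadj γ)^[n] v₀ = v₀ := by
    rw [iterate_smul_eq hadj, hn, pow_orderOf_eq_one, one_smul]
  have hpath := nobk_isPath hT _ (nobk_copy (iterWalk (gHom hadj γ) p n) rfl hend hW)
  have := closed_path_length hpath
  rw [Walk.length_copy, iterWalk_length (gHom hadj γ) p n] at this
  have : n * d = 0 := this
  rcases Nat.mul_eq_zero.mp this with h | h <;> omega

end FixedPoint

/-! ### Equivariant orientations -/

section Orientation

variable {Γ : Type} [Group Γ] [MulAction Γ V]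

/-- An equivariant orientation of the edges of `T`: a `Γ`-invariant choice of exactly one
direction of each edge. -/
lemma exists_orientation (T : SimpleGraph V)
    (hninv : ∀ (γ : Γ) (v w : V), T.Adj v w → ¬(γ • v = w ∧ γ • w = v)) :
    ∃ O : V × V → Prop,
      (∀ (γ : Γ) (e : V × V), O e → O (γ • e.1, γ • e.2)) ∧
      (∀ v w : V, T.Adj v w → (O (v, w) ↔ ¬O (w, v))) := by
  classical
  let r : V × V → V × V → Prop := fun e e' =>
    ∃ γ : Γ, e' = (γ • e.1, γ • e.2) ∨ e' = (γ • e.2, γ • e.1)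
  have hrefl : ∀ e, r e e := fun e => ⟨1, Or.inl (by simp)⟩
  have hsymm : ∀ {e e'}, r e e' → r e' e := by
    rintro e e' ⟨γ, h | h⟩
    · exact ⟨γ⁻¹, Or.inl (by rw [h]; simp)⟩
    · exact ⟨γ⁻¹, Or.inr (by rw [h]; simp)⟩
  have htrans : ∀ {e e' e''}, r e e' → r e' e'' → r e e'' := by
    rintro e e' e'' ⟨γ, h | h⟩ ⟨δ, h' | h'⟩
    · exact ⟨δ * γ, Or.inl (by rw [h', h]; simp [mul_smul])⟩
    · exact ⟨δ * γ, Or.inr (by rw [h', h]; simp [mul_smul])⟩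
    · exact ⟨δ * γ, Or.inr (by rw [h', h]; simp [mul_smul])⟩
    · exact ⟨δ * γ, Or.inl (by rw [h', h]; simp [mul_smul])⟩
  let s : Setoid (V × V) := ⟨r, fun e => hrefl e, hsymm, htrans⟩
  let rep : V × V → V × V := fun e => (Quotient.mk s e).out
  have hrep : ∀ e, r (rep e) e := fun e => Quotient.mk_out (s := s) e
  have hrep_eq : ∀ {e e'}, r e e' → rep e = rep e' := by
    intro e e' h
    show (Quotient.mk s e).out = (Quotient.mk s e').out
    rw [Quotient.sound (s := s) h]
  refine ⟨fun e => ∃ γ : Γ, (γ • (rep e).1, γ • (rep e).2) = e, ?_, ?_⟩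
  · rintro γ e ⟨δ, hδ⟩
    have hcls : rep (γ • e.1, γ • e.2) = rep e := hrep_eq (hsymm ⟨γ, Or.inl rfl⟩)
    refine ⟨γ * δ, ?_⟩
    have h1 : δ • (rep e).1 = e.1 := congrArg Prod.fst hδ
    have h2 : δ • (rep e).2 = e.2 := congrArg Prod.snd hδ
    rw [hcls]
    simp [mul_smul, h1, h2]
  · intro v w hvw
    have hflip : rep (w, v) = rep (v, w) := hrep_eq (⟨1, Or.inr (by simp)⟩ : r (w,v) (v,w))
    have notboth : ∀ (γ₁ γ₂ : Γ),
        (γ₁ • (rep (v,w)).1, γ₁ • (rep (v,w)).2) = (v, w) →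
        (γ₂ • (rep (v,w)).1, γ₂ • (rep (v,w)).2) = (w, v) → False := by
      intro γ₁ γ₂ h₁ h₂
      have hv : (γ₂ * γ₁⁻¹) • v = w := by
        have e1 : γ₁ • (rep (v,w)).1 = v := congrArg Prod.fst h₁
        have e2 : γ₂ • (rep (v,w)).1 = w := congrArg Prod.fst h₂
        rw [mul_smul, ← e1, inv_smul_smul, e2]
      have hw : (γ₂ * γ₁⁻¹) • w = v := by
        have e1 : γ₁ • (rep (v,w)).2 = w := congrArg Prod.snd h₁
        have e2 : γ₂ • (rep (v,w)).2 = v := congrArg Prod.snd h₂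
        rw [mul_smul, ← e1, inv_smul_smul, e2]
      exact hninv (γ₂ * γ₁⁻¹) v w hvw ⟨hv, hw⟩
    have hor : (∃ γ : Γ, (γ • (rep (v,w)).1, γ • (rep (v,w)).2) = (v, w)) ∨
        (∃ γ : Γ, (γ • (rep (v,w)).1, γ • (rep (v,w)).2) = (w, v)) := by
      obtain ⟨γ, h | h⟩ := hrep (v, w)
      · exact Or.inl ⟨γ, h.symm⟩
      · right
        refine ⟨γ, ?_⟩
        have h1 : γ • (rep (v,w)).2 = v := (congrArg Prod.fst h).symm
        have h2 : γ • (rep (v,w)).1 = w := (congrArg Prod.snd h).symm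
        rw [h1, h2]
    constructor
    · rintro ⟨γ₁, h₁⟩ ⟨γ₂, h₂⟩
      rw [hflip] at h₂
      exact notboth γ₁ γ₂ h₁ h₂
    · intro hnot
      rcases hor with h | ⟨γ, h⟩
      · exact h
      · exact absurd ⟨γ, by rw [hflip]; exact h⟩ hnot

end Orientation

/-! ### Free permutation representations -/

section PermFacts

/-- A finite group whose order divides `M` has a fixed-point-free permutation
representation on `M` letters. -/
lemma exists_free_rep (H : Type) [Group H] [Finite H] {M : ℕ} (hM : 0 < M)
    (hdvd : Nat.card H ∣ M) :
    ∃ ρ : H →* Equiv.Perm (Fin M), ∀ h : H, h ≠ 1 → ∀ z, ρ h z ≠ z := by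
  classical
  haveI := Fintype.ofFinite H
  set d := Fintype.card H with hd
  have hdvd' : d ∣ M := by rw [hd, ← Nat.card_eq_fintype_card]; exact hdvd
  set m := M / d with hm
  have hdm : d * m = M := Nat.mul_div_cancel' hdvd'
  let eP : H × Fin m ≃ Fin M :=
    ((Fintype.equivFin H).prodCongr (Equiv.refl (Fin m))).trans
      ((finProdFinEquiv).trans (finCongr hdm))
  let ρ : H →* Equiv.Perm (Fin M) :=
    { toFun := fun h => eP.permCongr ((Equiv.mulLeft h).prodCongr (Equiv.refl (Fin m)))
      map_one' := by
        ext z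
        simp
      map_mul' := by
        intro h₁ h₂
        ext z
        simp only [Equiv.permCongr_apply, Equiv.Perm.mul_apply, Equiv.prodCongr_apply,
          Equiv.symm_apply_apply, Equiv.coe_mulLeft, Equiv.coe_refl]
        congr 1
        obtain ⟨a, i⟩ := eP.symm z
        simp [mul_assoc] }
  refine ⟨ρ, ?_⟩
  intro h hh z hz
  have : ((Equiv.mulLeft h).prodCongr (Equiv.refl (Fin m))) (eP.symm z) = eP.symm z := by
    have : eP (((Equiv.mulLeft h).prodCongr (Equiv.refl (Fin m))) (eP.symm z)) = z := hz
    apply eP.injective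
    rw [this, Equiv.apply_symm_apply]
  have h1 : h * (eP.symm z).1 = (eP.symm z).1 := congrArg Prod.fst this
  exact hh (by
    have := mul_right_cancel (b := (eP.symm z).1) (a := h) (c := 1) (by simpa using h1)
    simpa using this)

/-- Any two fixed-point-free representations of a finite group on a finite set are
conjugate. -/
lemma exists_conj_free {Ω : Type} [Finite Ω] (H : Type) [Group H] [Finite H]
    (ρ₁ ρ₂ : H →* Equiv.Perm Ω)
    (h₁ : ∀ h : H, h ≠ 1 → ∀ z, ρ₁ h z ≠ z)
    (h₂ : ∀ h : H, h ≠ 1 → ∀ z, ρ₂ h z ≠ z) :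
    ∃ q : Equiv.Perm Ω, ∀ h, ρ₂ h = q * ρ₁ h * q⁻¹ := by
  classical
  haveI : Nonempty H := ⟨1⟩
  have key : ∀ (ρ : H →* Equiv.Perm Ω), (∀ h : H, h ≠ 1 → ∀ z, ρ h z ≠ z) →
      ∃ (Q : Type) (_ : Finite Q) (e : Ω ≃ Q × H),
        (∀ (c : Q × H), e.symm c = ρ c.2 (e.symm (c.1, 1))) ∧
        (∀ (h : H) (z : Ω), e (ρ h z) = ((e z).1, h * (e z).2)) := by
    intro ρ hfree
    have huniq : ∀ (z : Ω) (h h' : H), ρ h z = ρ h' z → h = h' := by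
      intro z h h' hzz
      by_contra hne
      have hne' : h'⁻¹ * h ≠ 1 := fun hc => hne (by
        have := congrArg (fun x => h' * x) hc
        simpa [← mul_assoc] using this)
      refine hfree _ hne' z ?_
      have hstep : ρ (h'⁻¹ * h) z = ρ h'⁻¹ (ρ h z) := by
        rw [map_mul]; rfl
      rw [hstep, hzz, ← Equiv.Perm.mul_apply, ← map_mul, inv_mul_cancel, map_one]
      rfl
    let s : Setoid Ω := ⟨fun z z' => ∃ h : H, ρ h z = z',
      ⟨fun z => ⟨1, by simp⟩,
       fun {z z'} ⟨h, hh⟩ => ⟨h⁻¹, by rw [← hh, ← Equiv.Perm.mul_apply, ← map_mul]; simp⟩,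
       fun {z z' z''} ⟨h, hh⟩ ⟨h', hh'⟩ =>
         ⟨h' * h, by rw [map_mul, Equiv.Perm.mul_apply, hh, hh']⟩⟩⟩
    have hex : ∀ z : Ω, ∃ h : H, ρ h (Quotient.mk s z).out = z := by
      intro z
      exact Quotient.exact (s := s) (Quotient.out_eq (Quotient.mk s z))
    let e : Ω ≃ Quotient s × H :=
      { toFun := fun z => (Quotient.mk s z, Classical.choose (hex z))
        invFun := fun c => ρ c.2 c.1.out
        left_inv := fun z => Classical.choose_spec (hex z)
        right_inv := by
          rintro ⟨c, h⟩
          have hcl : Quotient.mk s (ρ h c.out) = c := by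
            calc Quotient.mk s (ρ h c.out) = Quotient.mk s c.out :=
                  (Quotient.sound (s := s) ⟨h, rfl⟩).symm
              _ = c := Quotient.out_eq c
          have hspec := Classical.choose_spec (hex (ρ h c.out))
          have hspec' : ρ (Classical.choose (hex (ρ h c.out))) c.out = ρ h c.out :=
            (congrArg (ρ (Classical.choose (hex (ρ h c.out))))
              (congrArg Quotient.out hcl).symm).trans hspec
          have : Classical.choose (hex (ρ h c.out)) = h := huniq _ _ _ hspec'
          exact Prod.ext hcl this }
    have heq : ∀ (h : H) (z : Ω), e (ρ h z) = ((e z).1, h * (e z).2) := by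
      intro h z
      have hfst : Quotient.mk s (ρ h z) = Quotient.mk s z :=
        Quotient.sound (s := s) ⟨h⁻¹, by rw [← Equiv.Perm.mul_apply, ← map_mul]; simp⟩
      have hspec := Classical.choose_spec (hex (ρ h z))
      have hspec' : ρ (Classical.choose (hex (ρ h z))) (Quotient.mk s z).out = ρ h z :=
        (congrArg (ρ (Classical.choose (hex (ρ h z))))
          (congrArg Quotient.out hfst).symm).trans hspec
      have hz := Classical.choose_spec (hex z)
      have : ρ (h * Classical.choose (hex z)) (Quotient.mk s z).out = ρ h z := by
        rw [map_mul, Equiv.Perm.mul_apply, hz]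
      have hsnd : Classical.choose (hex (ρ h z)) = h * Classical.choose (hex z) :=
        huniq _ _ _ (hspec'.trans this.symm)
      exact Prod.ext hfst hsnd
    refine ⟨Quotient s, Quotient.finite _, e, ?_, heq⟩
    intro c
    show ρ c.2 c.1.out = ρ c.2 (ρ (1:H) c.1.out)
    rw [map_one]
    rfl
  obtain ⟨Q₁, hQ₁, e₁, hsymm₁, heq₁⟩ := key ρ₁ h₁
  obtain ⟨Q₂, hQ₂, e₂, hsymm₂, heq₂⟩ := key ρ₂ h₂
  haveI := hQ₁; haveI := hQ₂
  have hcard : Nat.card Q₁ = Nat.card Q₂ := by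
    have c1 : Nat.card Ω = Nat.card Q₁ * Nat.card H := by
      rw [Nat.card_congr e₁, Nat.card_prod]
    have c2 : Nat.card Ω = Nat.card Q₂ * Nat.card H := by
      rw [Nat.card_congr e₂, Nat.card_prod]
    have hH : 0 < Nat.card H := Nat.card_pos
    exact Nat.eq_of_mul_eq_mul_right hH (c1.symm.trans c2)
  obtain ⟨eQ⟩ : Nonempty (Q₁ ≃ Q₂) := by
    haveI := Fintype.ofFinite Q₁
    haveI := Fintype.ofFinite Q₂
    exact ⟨Fintype.equivOfCardEq (by
      rw [← Nat.card_eq_fintype_card, ← Nat.card_eq_fintype_card]; exact hcard)⟩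
  set q : Equiv.Perm Ω := (e₁.trans (eQ.prodCongr (Equiv.refl H))).trans e₂.symm with hqdef
  have hinter : ∀ (h : H) (z : Ω), q (ρ₁ h z) = ρ₂ h (q z) := by
    intro h z
    have hz1 := heq₁ h z
    show e₂.symm ((eQ.prodCongr (Equiv.refl H)) (e₁ (ρ₁ h z))) = _
    rw [hz1]
    have lhs : e₂.symm ((eQ.prodCongr (Equiv.refl H)) ((e₁ z).1, h * (e₁ z).2)) =
        e₂.symm (eQ (e₁ z).1, h * (e₁ z).2) := rfl
    rw [lhs, hsymm₂ (eQ (e₁ z).1, h * (e₁ z).2)]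
    show ρ₂ (h * (e₁ z).2) (e₂.symm (eQ (e₁ z).1, 1)) = _
    rw [map_mul, Equiv.Perm.mul_apply]
    congr 1
    show ρ₂ (e₁ z).2 (e₂.symm (eQ (e₁ z).1, 1)) =
      e₂.symm ((eQ.prodCongr (Equiv.refl H)) (e₁ z))
    rw [← hsymm₂ (eQ (e₁ z).1, (e₁ z).2)]
    rfl
  refine ⟨q, fun h => ?_⟩
  ext z
  rw [Equiv.Perm.mul_apply, Equiv.Perm.mul_apply]
  have := hinter h (q⁻¹ z)
  rw [Equiv.Perm.inv_def, Equiv.apply_symm_apply] at this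
  exact this.symm

end PermFacts

/-! ### The homomorphism to `Perm (Fin M)` -/

section MainHom

variable {Γ : Type} [Group Γ] [MulAction Γ V]

lemma exists_good_hom (hT : T.IsTree)
    (hadj : ∀ (γ : Γ) (v w : V), T.Adj v w → T.Adj (γ • v) (γ • w))
    (hninv : ∀ (γ : Γ) (v w : V), T.Adj v w → ¬(γ • v = w ∧ γ • w = v))
    (M : ℕ) (hM : 0 < M)
    (hfin : ∀ v : V, Finite (MulAction.stabilizer Γ v))
    (hstab : ∀ v : V, Nat.card (MulAction.stabilizer Γ v) ∣ M) :
    ∃ f : Γ →* Equiv.Perm (Fin M),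
      ∀ (γ : Γ) (v : V), γ • v = v → f γ = 1 → γ = 1 := by
  classical
  set Q := Equiv.Perm (Fin M) with hQ
  letI : Group Q := Equiv.Perm.permGroup
  -- vertex orbit representatives
  set rep : V → V := fun v => (Quotient.mk (MulAction.orbitRel Γ V) v).out with hrepdef
  have hrepex : ∀ v : V, ∃ γ : Γ, γ • rep v = v := by
    intro v
    have h : rep v ∈ MulAction.orbit Γ v :=
      Quotient.exact (s := MulAction.orbitRel Γ V)
        (Quotient.out_eq (Quotient.mk (MulAction.orbitRel Γ V) v))
    obtain ⟨γ, hγ⟩ := MulAction.mem_orbit_iff.1 h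
    exact ⟨γ⁻¹, by rw [← hγ, inv_smul_smul]⟩
  choose g hg using hrepex
  have hrep_smul : ∀ (γ : Γ) (v : V), rep (γ • v) = rep v := by
    intro γ v
    exact congrArg Quotient.out
      (Quotient.sound (s := MulAction.orbitRel Γ V)
        (MulAction.mem_orbit_iff.mpr ⟨γ, rfl⟩))
  -- free representations of the vertex stabilizers
  have hρex : ∀ v : V, ∃ ρ : MulAction.stabilizer Γ v →* Q,
      ∀ h, h ≠ 1 → ∀ z, ρ h z ≠ z := by
    intro v
    haveI := hfin v
    exact exists_free_rep _ hM (hstab v)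
  choose ρ hρfree using hρex
  have ρcast : ∀ (u u' : V) (h : u = u') (k : Γ) (hk : k ∈ MulAction.stabilizer Γ u)
      (hk' : k ∈ MulAction.stabilizer Γ u'), ρ u ⟨k, hk⟩ = ρ u' ⟨k, hk'⟩ := by
    intro u u' h k hk hk'
    subst h
    rfl
  -- the vertex cocycle
  have hamem : ∀ (γ : Γ) (v : V), (g (γ • v))⁻¹ * γ * g v ∈
      MulAction.stabilizer Γ (rep v) := by
    intro γ v
    rw [MulAction.mem_stabilizer_iff, mul_smul, mul_smul, hg v, inv_smul_eq_iff,
      ← hrep_smul γ v, hg (γ • v)]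
  set a : Γ → V → Q := fun γ v => ρ (rep v) ⟨(g (γ • v))⁻¹ * γ * g v, hamem γ v⟩
    with hadef
  have hamem' : ∀ (γ δ : Γ) (v : V), (g (γ • δ • v))⁻¹ * γ * g (δ • v) ∈
      MulAction.stabilizer Γ (rep v) := by
    intro γ δ v
    have h := hamem γ (δ • v)
    rwa [hrep_smul δ v] at h
  have ha_cocycle : ∀ (γ δ : Γ) (v : V), a (γ * δ) v = a γ (δ • v) * a δ v := by
    intro γ δ v
    have h1 : a γ (δ • v) = ρ (rep v)
        ⟨(g (γ • δ • v))⁻¹ * γ * g (δ • v), hamem' γ δ v⟩ :=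
      ρcast _ _ (hrep_smul δ v) _ (hamem γ (δ • v)) (hamem' γ δ v)
    rw [h1]
    show ρ (rep v) ⟨(g ((γ * δ) • v))⁻¹ * (γ * δ) * g v, hamem (γ * δ) v⟩ =
      ρ (rep v) ⟨(g (γ • δ • v))⁻¹ * γ * g (δ • v), hamem' γ δ v⟩ *
      ρ (rep v) ⟨(g (δ • v))⁻¹ * δ * g v, hamem δ v⟩
    rw [← map_mul]
    apply congrArg
    apply Subtype.ext
    show (g ((γ * δ) • v))⁻¹ * (γ * δ) * g v =
      ((g (γ • δ • v))⁻¹ * γ * g (δ • v)) * ((g (δ • v))⁻¹ * δ * g v)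
    rw [mul_smul]
    group
  have ha_one : ∀ v : V, a 1 v = 1 := by
    intro v
    show ρ (rep v) ⟨(g ((1:Γ) • v))⁻¹ * 1 * g v, hamem 1 v⟩ = 1
    have harg : (⟨(g ((1:Γ) • v))⁻¹ * 1 * g v, hamem 1 v⟩ :
        MulAction.stabilizer Γ (rep v)) = 1 := by
      apply Subtype.ext
      show (g ((1:Γ) • v))⁻¹ * 1 * g v = 1
      rw [one_smul]
      group
    rw [harg, map_one]
  have ha_free : ∀ (γ : Γ) (v : V), γ • v = v → γ ≠ 1 → ∀ z, a γ v z ≠ z := by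
    intro γ v hv hγ z
    show ρ (rep v) ⟨(g (γ • v))⁻¹ * γ * g v, hamem γ v⟩ z ≠ z
    apply hρfree (rep v)
    intro hc
    apply hγ
    have := congrArg Subtype.val hc
    simp only [OneMemClass.coe_one] at this
    have h2 : (g (γ • v))⁻¹ * γ * g v = 1 := this
    rw [hv] at h2
    have := congrArg (fun x => g v * x * (g v)⁻¹) h2
    simpa [mul_assoc] using this
  have ha_triv : ∀ (γ : Γ) (v : V), γ • v = v → a γ v = 1 → γ = 1 := by
    intro γ v hv h1
    by_contra hne
    exact ha_free γ v hv hne ⟨0, hM⟩ (by rw [h1]; rfl)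
  -- conjugators between the two stabilizer representations at the ends of an edge
  have hconj : ∀ fp : V × V, ∃ q : Q, ∀ (γ : Γ), γ • fp.1 = fp.1 → γ • fp.2 = fp.2 →
      a γ fp.2 = q * a γ fp.1 * q⁻¹ := by
    intro fp
    set H := MulAction.stabilizer Γ fp with hH
    haveI : Finite H := by
      haveI := hfin fp.1
      have hle : H ≤ MulAction.stabilizer Γ fp.1 := by
        intro γ hγ
        rw [MulAction.mem_stabilizer_iff] at hγ ⊢
        exact (congrArg Prod.fst hγ : (γ • fp).1 = fp.1)
      exact Finite.of_injective _ (Subgroup.inclusion_injective hle)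
    have hmem1 : ∀ h : H, (h : Γ) • fp.1 = fp.1 :=
      fun h => (congrArg Prod.fst h.2 : ((h : Γ) • fp).1 = fp.1)
    have hmem2 : ∀ h : H, (h : Γ) • fp.2 = fp.2 :=
      fun h => (congrArg Prod.snd h.2 : ((h : Γ) • fp).2 = fp.2)
    let ρ₁ : H →* Q :=
      { toFun := fun h => a h.1 fp.1
        map_one' := ha_one fp.1
        map_mul' := by
          intro x y
          show a (x.1 * y.1) fp.1 = a x.1 fp.1 * a y.1 fp.1
          rw [ha_cocycle, hmem1 y] }
    let ρ₂ : H →* Q :=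
      { toFun := fun h => a h.1 fp.2
        map_one' := ha_one fp.2
        map_mul' := by
          intro x y
          show a (x.1 * y.1) fp.2 = a x.1 fp.2 * a y.1 fp.2
          rw [ha_cocycle, hmem2 y] }
    have hfree₁ : ∀ h : H, h ≠ 1 → ∀ z, ρ₁ h z ≠ z := by
      intro h hh z
      apply ha_free _ _ (hmem1 h)
      intro hc
      exact hh (Subtype.ext hc)
    have hfree₂ : ∀ h : H, h ≠ 1 → ∀ z, ρ₂ h z ≠ z := by
      intro h hh z
      apply ha_free _ _ (hmem2 h)
      intro hc
      exact hh (Subtype.ext hc)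
    obtain ⟨q, hq⟩ := exists_conj_free H ρ₁ ρ₂ hfree₁ hfree₂
    refine ⟨q, fun γ h1 h2 => ?_⟩
    have hγH : γ ∈ H := by
      rw [hH, MulAction.mem_stabilizer_iff]
      exact Prod.ext h1 h2
    exact hq ⟨γ, hγH⟩
  choose tHat htHat using hconj
  -- edge orbit representatives
  set repE : V × V → V × V :=
    fun e => (Quotient.mk (MulAction.orbitRel Γ (V × V)) e).out with hrepEdef
  have hrepEex : ∀ e : V × V, ∃ γ : Γ, γ • repE e = e := by
    intro e
    have h : repE e ∈ MulAction.orbit Γ e :=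
      Quotient.exact (s := MulAction.orbitRel Γ (V × V))
        (Quotient.out_eq (Quotient.mk (MulAction.orbitRel Γ (V × V)) e))
    obtain ⟨γ, hγ⟩ := MulAction.mem_orbit_iff.1 h
    exact ⟨γ⁻¹, by rw [← hγ, inv_smul_smul]⟩
  choose gE hgE using hrepEex
  have hrepE_smul : ∀ (γ : Γ) (e : V × V), repE (γ • e) = repE e := by
    intro γ e
    exact congrArg Quotient.out
      (Quotient.sound (s := MulAction.orbitRel Γ (V × V))
        (MulAction.mem_orbit_iff.mpr ⟨γ, rfl⟩))
  -- the edge transport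
  set tO : V × V → Q :=
    fun e => a (gE e) (repE e).2 * tHat (repE e) * (a (gE e) (repE e).1)⁻¹ with htOdef
  have htO_equi : ∀ (γ : Γ) (e : V × V),
      tO (γ • e) = a γ e.2 * tO e * (a γ e.1)⁻¹ := by
    intro γ e
    have hre : repE (γ • e) = repE e := hrepE_smul γ e
    set h := (gE (γ • e))⁻¹ * γ * gE e with hdef
    have hh : h • repE e = repE e := by
      rw [hdef, mul_smul, mul_smul, hgE e, inv_smul_eq_iff, ← hre, hgE (γ • e)]
    have hh1 : h • (repE e).1 = (repE e).1 := congrArg Prod.fst hh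
    have hh2 : h • (repE e).2 = (repE e).2 := congrArg Prod.snd hh
    have hgE' : gE (γ • e) = γ * gE e * h⁻¹ := by rw [hdef]; group
    have he1 : gE e • (repE e).1 = e.1 := congrArg Prod.fst (hgE e)
    have he2 : gE e • (repE e).2 = e.2 := congrArg Prod.snd (hgE e)
    have hinv1 : h⁻¹ • (repE e).1 = (repE e).1 := by
      rw [inv_smul_eq_iff, hh1]
    have hinv2 : h⁻¹ • (repE e).2 = (repE e).2 := by
      rw [inv_smul_eq_iff, hh2]
    have expand : ∀ (x : V), h⁻¹ • x = x → (gE e) • x = ((gE e * h⁻¹) • x) := by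
      intro x hx
      rw [mul_smul, hx]
    have key2 : a (gE (γ • e)) (repE e).2
        = a γ e.2 * a (gE e) (repE e).2 * a h⁻¹ (repE e).2 := by
      rw [hgE', ha_cocycle (γ * gE e) h⁻¹, hinv2, ha_cocycle γ (gE e), he2]
    have key1 : a (gE (γ • e)) (repE e).1
        = a γ e.1 * a (gE e) (repE e).1 * a h⁻¹ (repE e).1 := by
      rw [hgE', ha_cocycle (γ * gE e) h⁻¹, hinv1, ha_cocycle γ (gE e), he1]
    have hintertwine : a h⁻¹ (repE e).2 =
        tHat (repE e) * a h⁻¹ (repE e).1 * (tHat (repE e))⁻¹ :=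
      htHat (repE e) h⁻¹ hinv1 hinv2
    rw [htOdef]
    simp only []
    rw [hre, key1, key2, hintertwine]
    group
  -- the orientation
  obtain ⟨O, hOinv, hOiff⟩ := exists_orientation (Γ := Γ) T hninv
  have hOinv' : ∀ (γ : Γ) (e : V × V), O e → O (γ • e) := by
    intro γ e he
    have := hOinv γ e he
    have heq : (γ • e.1, γ • e.2) = γ • e := by
      ext <;> simp
    rwa [heq] at this
  have hOinv'' : ∀ (γ : Γ) (e : V × V), ¬O e → ¬O (γ • e) := by
    intro γ e he hc
    apply he
    have := hOinv' γ⁻¹ _ hc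
    rwa [inv_smul_smul] at this
  set t : V × V → Q := fun e => if O e then tO e else (tO (e.2, e.1))⁻¹ with htdef
  have ht_symm : ∀ (v w : V), T.Adj v w → t (w, v) = (t (v, w))⁻¹ := by
    intro v w hvw
    rw [htdef]
    simp only []
    by_cases hO : O (v, w)
    · have hnO : ¬O (w, v) := (hOiff v w hvw).1 hO
      rw [if_neg hnO, if_pos hO]
    · have hO' : O (w, v) := by
        by_contra hc
        exact hO ((hOiff v w hvw).2 hc)
      rw [if_pos hO', if_neg hO]
      simp
  have ht_equi : ∀ (γ : Γ) (v w : V),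
      t (γ • v, γ • w) = a γ w * t (v, w) * (a γ v)⁻¹ := by
    intro γ v w
    have hpair : (γ • v, γ • w) = γ • (v, w) := by ext <;> simp
    have hpair' : (γ • w, γ • v) = γ • (w, v) := by ext <;> simp
    rw [htdef]
    simp only []
    by_cases hO : O (v, w)
    · have : O (γ • v, γ • w) := by rw [hpair]; exact hOinv' γ _ hO
      rw [if_pos this, if_pos hO, hpair, htO_equi]
    · have : ¬O (γ • v, γ • w) := by rw [hpair]; exact hOinv'' γ _ hO
      rw [if_neg this, if_neg hO, hpair', htO_equi]
      group
  -- the edge labelling and transport along tree paths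
  set ℓ : ∀ ⦃v w : V⦄, T.Adj v w → Q := fun v w _ => t (v, w) with hℓdef
  have hsymmℓ : ∀ ⦃v w : V⦄ (h : T.Adj v w), ℓ h.symm = (ℓ h)⁻¹ := by
    intro v w h
    exact ht_symm v w h
  set τ : V → V → Q := fun v w => plabel ℓ hT v w with hτdef
  have hτ_trans : ∀ v w u : V, τ w u * τ v w = τ v u :=
    fun v w u => plabel_trans ℓ hsymmℓ hT v w u
  have hτ_symm : ∀ v w : V, τ w v = (τ v w)⁻¹ :=
    fun v w => plabel_symm ℓ hsymmℓ hT v w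
  have hτ_self : ∀ v : V, τ v v = 1 := fun v => plabel_self ℓ hT v
  have hτ_equi : ∀ (γ : Γ) (v w : V), τ (γ • v) (γ • w) = a γ w * τ v w * (a γ v)⁻¹ := by
    intro γ v w
    show plabel ℓ hT (γ • v) (γ • w) = a γ w * plabel ℓ hT v w * (a γ v)⁻¹
    have hmap := wlabel_map ℓ hT (gHom hadj γ) (a γ)
      (fun v' w' h' => ht_equi γ v' w') (pb hT v w)
    rw [wlabel_eq_plabel ℓ hsymmℓ hT ((pb hT v w).map (gHom hadj γ))] at hmap
    exact hmap
  -- base vertex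
  haveI : Nonempty V := hT.isConnected.nonempty
  obtain ⟨v₀⟩ := ‹Nonempty V›
  -- the homomorphism
  refine ⟨{ toFun := fun γ => τ (γ • v₀) v₀ * a γ v₀
            map_one' := by
              show τ ((1:Γ) • v₀) v₀ * a 1 v₀ = 1
              rw [ha_one, one_smul, hτ_self, one_mul]
            map_mul' := by
              intro γ δ
              show τ ((γ * δ) • v₀) v₀ * a (γ * δ) v₀ =
                (τ (γ • v₀) v₀ * a γ v₀) * (τ (δ • v₀) v₀ * a δ v₀)
              rw [ha_cocycle, mul_smul]
              have hX : a γ (δ • v₀) =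
                  (τ (γ • δ • v₀) (γ • v₀))⁻¹ * a γ v₀ * τ (δ • v₀) v₀ := by
                have := hτ_equi γ (δ • v₀) v₀
                rw [eq_comm, ← eq_comm (a := τ (γ • δ • v₀) (γ • v₀))] at this
                rw [this]
                group
              rw [hX]
              have hY : τ (γ • δ • v₀) v₀ * (τ (γ • δ • v₀) (γ • v₀))⁻¹ =
                  τ (γ • v₀) v₀ := by
                rw [← hτ_symm, hτ_trans]
              calc τ (γ • δ • v₀) v₀ *
                    ((τ (γ • δ • v₀) (γ • v₀))⁻¹ * a γ v₀ * τ (δ • v₀) v₀ * a δ v₀)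
                  = (τ (γ • δ • v₀) v₀ * (τ (γ • δ • v₀) (γ • v₀))⁻¹) *
                    a γ v₀ * τ (δ • v₀) v₀ * a δ v₀ := by group
                _ = τ (γ • v₀) v₀ * a γ v₀ * τ (δ • v₀) v₀ * a δ v₀ := by rw [hY]
                _ = (τ (γ • v₀) v₀ * a γ v₀) * (τ (δ • v₀) v₀ * a δ v₀) := by group },
    ?_⟩
  intro γ w hw hfγ
  have hfγ' : τ (γ • v₀) v₀ * a γ v₀ = 1 := hfγ
  have hav₀ : a γ v₀ = τ v₀ (γ • v₀) := by
    rw [hτ_symm]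
    have h1 : τ (γ • v₀) v₀ = (a γ v₀)⁻¹ := eq_inv_of_mul_eq_one_left hfγ'
    rw [h1, inv_inv]
  have haw : a γ w = 1 := by
    have h2 := hτ_equi γ v₀ w
    rw [hw] at h2
    have h3 : a γ w = τ (γ • v₀) w * a γ v₀ * (τ v₀ w)⁻¹ := by
      rw [h2]; group
    rw [h3, hav₀, ← hτ_symm]
    have h4 : τ (γ • v₀) w * τ v₀ (γ • v₀) = τ v₀ w := hτ_trans v₀ (γ • v₀) w
    calc τ (γ • v₀) w * τ v₀ (γ • v₀) * τ w v₀
        = τ v₀ w * τ w v₀ := by rw [h4]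
      _ = τ w w := hτ_trans w v₀ w
      _ = 1 := hτ_self w
  exact ha_triv γ w hw haw

end MainHom

/-! ### A group acting freely on a tree is free -/

section FreeKernel

open CategoryTheory

theorem isFreeGroup_of_free_action {V : Type} {T : SimpleGraph V} (K : Type) [Group K]
    [MulAction K V] (hT : T.IsTree)
    (hadj : ∀ (k : K) (v w : V), T.Adj v w → T.Adj (k • v) (k • w))
    (hninv : ∀ (k : K) (v w : V), T.Adj v w → ¬(k • v = w ∧ k • w = v))
    (hfree : ∀ (k : K) (v : V), k • v = v → k = 1) : IsFreeGroup K := by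
  classical
  haveI : Nonempty V := hT.isConnected.nonempty
  set Ob := Quotient (MulAction.orbitRel K V) with hOb
  set Qm : V → Ob := fun v => Quotient.mk (MulAction.orbitRel K V) v with hQm
  have hmk_smul : ∀ (k : K) (v : V), Qm (k • v) = Qm v := fun k v =>
    Quotient.sound (MulAction.mem_orbit_iff.mpr ⟨k, rfl⟩)
  have hex : ∀ (v w : V), Qm v = Qm w → ∃ k : K, k • w = v := by
    intro v w h
    exact MulAction.mem_orbit_iff.1 (Quotient.exact h)
  choose dlt hdlt using hex
  have hdlt_unique : ∀ (v w : V) (h : Qm v = Qm w) (k : K), k • w = v → k = dlt v w h := by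
    intro v w h k hk
    have h2 := hdlt v w h
    have h3 : (k⁻¹ * dlt v w h) • w = w := by
      rw [mul_smul, h2, ← hk, inv_smul_smul]
    have h4 := hfree _ _ h3
    have := congrArg (fun x => k * x) h4
    simpa [← mul_assoc] using this.symm
  have dlt_congr : ∀ (v w w' : V) (hww : w = w') (pf : Qm v = Qm w) (pf' : Qm v = Qm w'),
      dlt v w pf = dlt v w' pf' := by
    intro v w w' hww pf pf'
    subst hww
    rfl
  have hout_mk : ∀ x : Ob, (Qm x.out) = x := fun x => Quotient.out_eq x
  have hout_out : ∀ x : Ob, (Qm x.out).out = x.out := fun x =>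
    congrArg Quotient.out (hout_mk x)
  -- the quotient groupoid
  letI instGrpd : Groupoid Ob :=
    { Hom := fun _ y => {w : V // Qm w = y}
      id := fun x => ⟨x.out, hout_mk x⟩
      comp := fun {x y z} p q =>
        ⟨dlt p.1 y.out (p.2.trans (hout_mk y).symm) • q.1, by rw [hmk_smul, q.2]⟩
      id_comp := by
        intro x y p
        apply Subtype.ext
        show dlt x.out x.out _ • p.1 = p.1
        rw [← hdlt_unique x.out x.out _ 1 (one_smul _ _), one_smul]
      comp_id := by
        intro x y p
        apply Subtype.ext
        show dlt p.1 y.out _ • y.out = p.1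
        exact hdlt p.1 y.out _
      assoc := by
        intro x y z u p q r
        apply Subtype.ext
        show dlt (dlt p.1 y.out _ • q.1) z.out _ • r.1 =
          dlt p.1 y.out _ • (dlt q.1 z.out _ • r.1)
        have hkey : dlt p.1 y.out (p.2.trans (hout_mk y).symm) * dlt q.1 z.out
            (q.2.trans (hout_mk z).symm) =
            dlt (dlt p.1 y.out (p.2.trans (hout_mk y).symm) • q.1) z.out
              ((hmk_smul _ _).trans (q.2.trans (hout_mk z).symm)) := by
          apply hdlt_unique
          rw [mul_smul, hdlt q.1 z.out]
        rw [← hkey, mul_smul]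
      inv := fun {x y} p => ⟨dlt y.out p.1 ((hout_mk y).trans p.2.symm) • x.out,
        by rw [hmk_smul, hout_mk]⟩
      inv_comp := by
        intro x y p
        apply Subtype.ext
        show dlt (dlt y.out p.1 _ • x.out) x.out _ • p.1 = y.out
        have : dlt (dlt y.out p.1 ((hout_mk y).trans p.2.symm) • x.out) x.out
            (by rw [hmk_smul, hout_mk]) = dlt y.out p.1 ((hout_mk y).trans p.2.symm) :=
          (hdlt_unique _ _ _ _ rfl).symm
        rw [this, hdlt]
      comp_inv := by
        intro x y p
        apply Subtype.ext
        show dlt p.1 y.out _ • (dlt y.out p.1 _ • x.out) = x.out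
        rw [← mul_smul]
        have hfix : (dlt p.1 y.out (p.2.trans (hout_mk y).symm) *
            dlt y.out p.1 ((hout_mk y).trans p.2.symm)) • p.1 = p.1 := by
          rw [mul_smul, hdlt y.out p.1, hdlt p.1 y.out]
        rw [hfree _ _ hfix, one_smul] }
  have comp_val : ∀ {x y z : Ob} (p : x ⟶ y) (q : y ⟶ z),
      (p ≫ q).1 = dlt p.1 y.out (p.2.trans (hout_mk y).symm) • q.1 := fun p q => rfl
  have id_val : ∀ x : Ob, (𝟙 x : x ⟶ x).1 = x.out := fun x => rfl
  -- connectedness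
  haveI : Nonempty Ob := ⟨Qm (Classical.arbitrary V)⟩
  haveI instConn : IsConnected Ob :=
    zigzag_isConnected (fun x y =>
      Relation.ReflTransGen.single (Or.inl ⟨(⟨y.out, hout_mk y⟩ : x ⟶ y)⟩))
  -- orientation
  obtain ⟨O, hOinv, hOiff⟩ := exists_orientation (Γ := K) T hninv
  -- a cast lemma for functors to a single-object category
  have Ecast : ∀ {X : Type} [Group X] (E : Ob ⥤ SingleObj X)
      (x x' y y' : Ob) (hx : x = x') (hy : y = y') (w : V) (hp : Qm w = y)
      (hp' : Qm w = y'),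
      E.map (X := x) (Y := y) ⟨w, hp⟩ = E.map (X := x') (Y := y') ⟨w, hp'⟩ := by
    intro X _ E x x' y y' hx hy w hp hp'
    subst hx
    subst hy
    rfl
  -- the free groupoid structure
  letI instFree : IsFreeGroupoid Ob :=
    { quiverGenerators :=
        ⟨fun x y => {w : V // (T.Adj (show Ob from x).out w ∧
            Qm w = (show Ob from y)) ∧ O ((show Ob from x).out, w)}⟩
      of := fun {x y} e => (⟨e.1, e.2.1.2⟩ : (show Ob from x) ⟶ y)
      unique_lift := by
        intro X instX f
        letI : Quiver (IsFreeGroupoid.Generators Ob) :=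
          ⟨fun x y => {w : V // (T.Adj (show Ob from x).out w ∧
            Qm w = (show Ob from y)) ∧ O ((show Ob from x).out, w)}⟩
        -- edge labelling
        set ℓ : ∀ ⦃v w : V⦄, T.Adj v w → X := fun v w h =>
          if hO : O (v, w) then
            @f (Qm v) (Qm w) ⟨(dlt v ((Qm v).out) (hout_mk (Qm v)).symm)⁻¹ • w,
              ⟨⟨by
                have hk := hdlt v ((Qm v).out) (hout_mk (Qm v)).symm
                have h2 := hadj (dlt v ((Qm v).out) (hout_mk (Qm v)).symm)⁻¹ v w h
                have h4 : (dlt v ((Qm v).out) (hout_mk (Qm v)).symm)⁻¹ • v =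
                    (Qm v).out := inv_smul_eq_iff.mpr hk.symm
                rwa [h4] at h2, by rw [hmk_smul]⟩, by
                have h3 := hOinv (dlt v ((Qm v).out) (hout_mk (Qm v)).symm)⁻¹ (v, w) hO
                have hk := hdlt v ((Qm v).out) (hout_mk (Qm v)).symm
                have h4 : (dlt v ((Qm v).out) (hout_mk (Qm v)).symm)⁻¹ • v =
                    (Qm v).out := inv_smul_eq_iff.mpr hk.symm
                rwa [h4] at h3⟩⟩
          else
            (@f (Qm w) (Qm v) ⟨(dlt w ((Qm w).out) (hout_mk (Qm w)).symm)⁻¹ • v,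
              ⟨⟨by
                have hk := hdlt w ((Qm w).out) (hout_mk (Qm w)).symm
                have h2 := hadj (dlt w ((Qm w).out) (hout_mk (Qm w)).symm)⁻¹ w v h.symm
                have h4 : (dlt w ((Qm w).out) (hout_mk (Qm w)).symm)⁻¹ • w =
                    (Qm w).out := inv_smul_eq_iff.mpr hk.symm
                rwa [h4] at h2, by rw [hmk_smul]⟩, by
                have hO' : O (w, v) := by
                  by_contra hc
                  exact hO ((hOiff v w h).2 hc)
                have h3 := hOinv (dlt w ((Qm w).out) (hout_mk (Qm w)).symm)⁻¹ (w, v) hO'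
                have hk := hdlt w ((Qm w).out) (hout_mk (Qm w)).symm
                have h4 : (dlt w ((Qm w).out) (hout_mk (Qm w)).symm)⁻¹ • w =
                    (Qm w).out := inv_smul_eq_iff.mpr hk.symm
                rwa [h4] at h3⟩⟩)⁻¹
          with hℓdef
        -- a cast lemma for the labelling
        have fcast2 : ∀ (x x' y y' : IsFreeGroupoid.Generators Ob)
            (hx : x = x') (hy : y = y') (w w' : V) (hww : w = w') hp hp',
            @f x y ⟨w, hp⟩ = @f x' y' ⟨w', hp'⟩ := by
          intro x x' y y' hx hy w w' hww hp hp'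
          subst hx
          subst hy
          subst hww
          rfl
        -- symmetry of the labelling
        have hℓsymm : ∀ ⦃v w : V⦄ (h : T.Adj v w), ℓ h.symm = (ℓ h)⁻¹ := by
          intro v w h
          by_cases hO : O (v, w)
          · have hnO : ¬O (w, v) := (hOiff v w h).1 hO
            simp only [hℓdef]
            rw [dif_neg hnO, dif_pos hO]
          · have hO' : O (w, v) := by
              by_contra hc
              exact hO ((hOiff v w h).2 hc)
            simp only [hℓdef]
            rw [dif_pos hO', dif_neg hO, inv_inv]
        -- equivariance of the normalization
        have hdlt_smul : ∀ (k : K) (v : V),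
            dlt (k • v) ((Qm (k • v)).out) (hout_mk (Qm (k • v))).symm =
              k * dlt v ((Qm v).out) (hout_mk (Qm v)).symm := by
          intro k v
          have e1 : (Qm (k • v)).out = (Qm v).out :=
            congrArg Quotient.out (hmk_smul k v)
          have e2 : dlt (k • v) ((Qm (k • v)).out) (hout_mk (Qm (k • v))).symm =
              dlt (k • v) ((Qm v).out)
                ((hmk_smul k v).trans (hout_mk (Qm v)).symm) :=
            dlt_congr _ _ _ e1 _ _
          rw [e2]
          refine (hdlt_unique _ _ _ _ ?_).symm
          rw [mul_smul, hdlt v]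
        have hval : ∀ (k : K) (v w : V),
            (dlt (k • v) ((Qm (k • v)).out) (hout_mk (Qm (k • v))).symm)⁻¹ • (k • w) =
            (dlt v ((Qm v).out) (hout_mk (Qm v)).symm)⁻¹ • w := by
          intro k v w
          rw [hdlt_smul, mul_inv_rev, mul_smul, inv_smul_smul]
        -- invariance of the labelling
        have hℓinv : ∀ (k : K) ⦃v w : V⦄ (h : T.Adj v w) (h' : T.Adj (k • v) (k • w)),
            ℓ h' = ℓ h := by
          intro k v w h h'
          by_cases hO : O (v, w)
          · have hO2 : O (k • v, k • w) := by
              have := hOinv k (v, w) hO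
              exact this
            simp only [hℓdef]
            rw [dif_pos hO2, dif_pos hO]
            exact fcast2 _ _ _ _ (hmk_smul k v) (hmk_smul k w) _ _ (hval k v w) _ _
          · have hO2 : ¬O (k • v, k • w) := by
              intro hc
              apply hO
              have := hOinv k⁻¹ (k • v, k • w) hc
              simpa [inv_smul_smul] using this
            simp only [hℓdef]
            rw [dif_neg hO2, dif_neg hO]
            exact congrArg Inv.inv
              (fcast2 _ _ _ _ (hmk_smul k w) (hmk_smul k v) _ _ (hval k w v) _ _)
        -- transport along paths
        set τ : V → V → X := fun v w => plabel ℓ hT v w with hτdef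
        have hτtrans : ∀ v w u : V, τ w u * τ v w = τ v u :=
          fun v w u => plabel_trans ℓ hℓsymm hT v w u
        have hτself : ∀ v : V, τ v v = 1 := fun v => plabel_self ℓ hT v
        have hτinv : ∀ (k : K) (v w : V), τ (k • v) (k • w) = τ v w := by
          intro k v w
          show plabel ℓ hT (k • v) (k • w) = plabel ℓ hT v w
          have hmap := wlabel_map ℓ hT (gHom hadj k) (fun _ => (1:X))
            (fun v' w' h' => by
              rw [one_mul, inv_one, mul_one]
              exact hℓinv k h' ((gHom hadj k).map_adj h')) (pb hT v w)
          rw [wlabel_eq_plabel ℓ hℓsymm hT ((pb hT v w).map (gHom hadj k))] at hmap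
          rw [one_mul, inv_one, mul_one] at hmap
          exact hmap
        -- the value of `f` on a generator equals the edge label
        have hgen : ∀ (a b : IsFreeGroupoid.Generators Ob)
            (e : a ⟶ b), ℓ e.2.1.1 = @f a b e := by
          intro a b e
          obtain ⟨w, ⟨⟨hA, hmk⟩, hO⟩⟩ := e
          simp only [hℓdef]
          rw [dif_pos hO]
          have e3 : (Qm (show Ob from a).out).out = (show Ob from a).out :=
            congrArg Quotient.out (hout_mk (show Ob from a))
          have hk1' : dlt (show Ob from a).out ((Qm (show Ob from a).out).out)
              (hout_mk (Qm (show Ob from a).out)).symm • (show Ob from a).out =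
              (show Ob from a).out :=
            (congrArg (fun z => dlt (show Ob from a).out ((Qm (show Ob from a).out).out)
              (hout_mk (Qm (show Ob from a).out)).symm • z) e3.symm).trans (hdlt _ _ _)
          have hk1 : dlt (show Ob from a).out ((Qm (show Ob from a).out).out)
              (hout_mk (Qm (show Ob from a).out)).symm = 1 := hfree _ _ hk1'
          refine fcast2 _ _ _ _ (hout_mk (show Ob from a)) hmk _ _ ?_ _ _
          rw [hk1, inv_one, one_smul]
        -- the functor
        let F : Ob ⥤ SingleObj X :=
          { obj := fun _ => SingleObj.star X
            map := fun {x y} p => τ x.out p.1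
            map_id := by
              intro x
              show τ x.out x.out = 𝟙 (SingleObj.star X)
              rw [SingleObj.id_as_one]
              exact hτself x.out
            map_comp := by
              intro x y z p q
              show τ x.out (p ≫ q).1 = _
              rw [SingleObj.comp_as_mul]
              show τ x.out (dlt p.1 y.out (p.2.trans (hout_mk y).symm) • q.1) =
                τ y.out q.1 * τ x.out p.1
              have h1 : τ p.1 (dlt p.1 y.out (p.2.trans (hout_mk y).symm) • q.1) =
                  τ y.out q.1 := by
                have h2 : p.1 = dlt p.1 y.out (p.2.trans (hout_mk y).symm) • y.out :=
                  (hdlt _ _ _).symm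
                calc τ p.1 (dlt p.1 y.out (p.2.trans (hout_mk y).symm) • q.1)
                    = τ (dlt p.1 y.out (p.2.trans (hout_mk y).symm) • y.out)
                      (dlt p.1 y.out (p.2.trans (hout_mk y).symm) • q.1) := by
                        rw [← h2]
                  _ = τ y.out q.1 := hτinv _ _ _
              rw [← h1, hτtrans] }
        have hFmap : ∀ (x y : Ob) (p : x ⟶ y), F.map p = τ x.out p.1 := fun x y p => rfl
        -- a helper for the identity
        have hFof : ∀ (a b : IsFreeGroupoid.Generators Ob) (e : a ⟶ b),
            F.map (X := show Ob from a) (Y := show Ob from b) ⟨e.1, e.2.1.2⟩ = @f a b e := by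
          intro a b e
          rw [hFmap]
          have hpb : pb hT (show Ob from a).out e.1 = Walk.cons e.2.1.1 Walk.nil :=
            path_of_adj hT e.2.1.1 (pb_isPath hT _ _)
          show wlabel ℓ (pb hT (show Ob from a).out e.1) = @f a b e
          rw [hpb, wlabel_cons, wlabel_nil, one_mul]
          exact hgen a b e
        -- uniqueness core: every morphism's image is determined
        have key : ∀ (E : Ob ⥤ SingleObj X),
            (∀ (a b : IsFreeGroupoid.Generators Ob) (e : a ⟶ b),
              E.map (X := show Ob from a) (Y := show Ob from b) ⟨e.1, e.2.1.2⟩ = @f a b e) →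
            ∀ (n : ℕ) (x : Ob) (w : V) (p : T.Walk x.out w), p.length ≤ n →
              E.map (X := x) (Y := Qm w) ⟨w, rfl⟩ = τ x.out w := by
          intro E hE
          have hnil : ∀ x : Ob, E.map (X := x) (Y := Qm x.out) ⟨x.out, rfl⟩ =
              τ x.out x.out := by
            intro x
            have h1 : E.map (X := x) (Y := Qm x.out) ⟨x.out, rfl⟩ =
                E.map (X := x) (Y := x) ⟨x.out, hout_mk x⟩ :=
              Ecast E x x (Qm x.out) x rfl (hout_mk x) x.out rfl (hout_mk x)
            rw [h1]
            have h2 : (⟨x.out, hout_mk x⟩ : x ⟶ x) = 𝟙 x := rfl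
            rw [h2, E.map_id, SingleObj.id_as_one]
            exact (hτself x.out).symm
          intro n
          induction n with
          | zero =>
            intro x w p hlen
            cases p with
            | nil => exact hnil x
            | cons h q => simp [Walk.length_cons] at hlen
          | succ n ih =>
            intro x w p hlen
            cases p with
            | nil => exact hnil x
            | @cons _ v₁ _ h q =>
              have hk : dlt v₁ ((Qm v₁).out) (hout_mk (Qm v₁)).symm • (Qm v₁).out = v₁ :=
                hdlt _ _ _
              set k := dlt v₁ ((Qm v₁).out) (hout_mk (Qm v₁)).symm with hkdef
              have hov : k⁻¹ • v₁ = (Qm v₁).out := inv_smul_eq_iff.mpr hk.symm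
              let hm1 : x ⟶ Qm v₁ := ⟨v₁, rfl⟩
              let hm2 : (Qm v₁ : Ob) ⟶ Qm w := ⟨k⁻¹ • w, hmk_smul _ _⟩
              have hsplit : (⟨w, rfl⟩ : x ⟶ Qm w) = hm1 ≫ hm2 := by
                apply Subtype.ext
                show w = k • (k⁻¹ • w)
                rw [smul_inv_smul]
              rw [hsplit, E.map_comp, SingleObj.comp_as_mul]
              have hhom2 : E.map hm2 = τ v₁ w := by
                show E.map (X := Qm v₁) (Y := Qm w) ⟨k⁻¹ • w, hmk_smul _ _⟩ = τ v₁ w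
                have hcast := Ecast E (Qm v₁) (Qm v₁) (Qm w) (Qm (k⁻¹ • w)) rfl
                  (hmk_smul k⁻¹ w).symm (k⁻¹ • w) (hmk_smul _ _) rfl
                rw [hcast]
                have hlen2 : ((q.map (gHom hadj k⁻¹)).copy hov rfl).length ≤ n := by
                  rw [Walk.length_copy (q.map (gHom hadj k⁻¹)) hov rfl, Walk.length_map]
                  simp [Walk.length_cons] at hlen
                  omega
                have hih := ih (Qm v₁) (k⁻¹ • w)
                  ((q.map (gHom hadj k⁻¹)).copy hov rfl) hlen2
                rw [hih, ← hov]
                exact hτinv k⁻¹ v₁ w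
              rw [hhom2]
              have hhom1 : E.map hm1 = ℓ h := by
                show E.map (X := x) (Y := Qm v₁) ⟨v₁, rfl⟩ = ℓ h
                by_cases hO : O (x.out, v₁)
                · have h5 := hE x (Qm v₁) ⟨v₁, ⟨⟨h, rfl⟩, hO⟩⟩
                  rw [h5]
                  exact (hgen x (Qm v₁) ⟨v₁, ⟨⟨h, rfl⟩, hO⟩⟩).symm
                · have hO' : O (v₁, x.out) := by
                    by_contra hc
                    exact hO ((hOiff x.out v₁ h).mpr hc)
                  have adjpf : T.Adj ((Qm v₁).out) (k⁻¹ • x.out) := by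
                    have h2 := hadj k⁻¹ v₁ x.out h.symm
                    rwa [hov] at h2
                  have Opf : O ((Qm v₁).out, k⁻¹ • x.out) := by
                    have h3 := hOinv k⁻¹ (v₁, x.out) hO'
                    rwa [hov] at h3
                  have h5 := hE (Qm v₁) (Qm x.out) ⟨k⁻¹ • x.out,
                    ⟨⟨adjpf, hmk_smul _ _⟩, Opf⟩⟩
                  have hcomp : (⟨k⁻¹ • x.out, hmk_smul _ _⟩ : Qm v₁ ⟶ Qm x.out) ≫
                      (⟨v₁, rfl⟩ : Qm x.out ⟶ Qm v₁) = 𝟙 (Qm v₁) := by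
                    apply Subtype.ext
                    show dlt (k⁻¹ • x.out) ((Qm x.out).out)
                      ((hmk_smul _ _).trans (hout_mk (Qm x.out)).symm) • v₁ = (Qm v₁).out
                    have e3 : (Qm x.out).out = x.out := congrArg Quotient.out (hout_mk x)
                    have hm : dlt (k⁻¹ • x.out) ((Qm x.out).out)
                        ((hmk_smul _ _).trans (hout_mk (Qm x.out)).symm) = k⁻¹ :=
                      (hdlt_unique _ _ _ _ (congrArg (fun z => k⁻¹ • z) e3)).symm
                    rw [hm, hov]
                  have h6 := congrArg
                    (fun p : (Qm v₁ : Ob) ⟶ Qm v₁ => E.map p) hcomp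
                  rw [E.map_comp, E.map_id, SingleObj.comp_as_mul,
                    SingleObj.id_as_one] at h6
                  have h7 : E.map (X := x) (Y := Qm v₁) ⟨v₁, rfl⟩ =
                      E.map (X := Qm x.out) (Y := Qm v₁) ⟨v₁, rfl⟩ :=
                    Ecast E x (Qm x.out) (Qm v₁) (Qm v₁) (hout_mk x).symm rfl v₁ rfl rfl
                  have h8 : E.map (X := Qm x.out) (Y := Qm v₁) ⟨v₁, rfl⟩ =
                      (E.map (X := Qm v₁) (Y := Qm x.out)
                        ⟨k⁻¹ • x.out, hmk_smul _ _⟩)⁻¹ :=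
                    eq_inv_of_mul_eq_one_left h6
                  rw [h7, h8, h5]
                  simp only [hℓdef]
                  rw [dif_neg hO]
              rw [hhom1]
              exact (plabel_cons ℓ hℓsymm hT h w).symm
        refine ⟨F, hFof, ?_⟩
        intro E hE'
        refine CategoryTheory.Functor.ext ?_ ?_
        · exact fun x => rfl
        · intro x y p
          obtain ⟨w, hw⟩ := p
          subst hw
          have hkey := key E hE' ((pb hT x.out w).length) x w (pb hT x.out w) le_rfl
          simp only [eqToHom_refl, Category.comp_id, Category.id_comp]
          exact hkey
        }
  -- conclude via the vertex group at a basepoint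
  set x₀ : Ob := Qm (Classical.arbitrary V) with hx₀
  haveI instFreeEnd : IsFreeGroup (CategoryTheory.End x₀) :=
    IsFreeGroupoid.endIsFreeOfConnectedFree x₀
  let ψ : K →* CategoryTheory.End x₀ :=
    { toFun := fun k => (⟨k⁻¹ • x₀.out, by rw [hmk_smul, hout_mk]⟩ : x₀ ⟶ x₀)
      map_one' := by
        apply Subtype.ext
        show (1:K)⁻¹ • x₀.out = (𝟙 x₀ : x₀ ⟶ x₀).1
        rw [inv_one, one_smul]
        rfl
      map_mul' := by
        intro k k'
        apply Subtype.ext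
        show (k * k')⁻¹ • x₀.out =
          dlt (k'⁻¹ • x₀.out) x₀.out (((hmk_smul _ _).trans (hout_mk x₀)).trans
            (hout_mk x₀).symm) • (k⁻¹ • x₀.out)
        have hm : dlt (k'⁻¹ • x₀.out) x₀.out (((hmk_smul _ _).trans (hout_mk x₀)).trans
            (hout_mk x₀).symm) = k'⁻¹ := (hdlt_unique _ _ _ _ rfl).symm
        rw [hm, mul_inv_rev, mul_smul] }
  have hinj : Function.Injective ψ := by
    intro k k' hkk
    have h1 : k⁻¹ • x₀.out = k'⁻¹ • x₀.out := congrArg Subtype.val hkk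
    have h2 : (k' * k⁻¹) • x₀.out = x₀.out := by
      rw [mul_smul, h1, smul_inv_smul]
    have h3 := hfree _ _ h2
    have h4 := congrArg (fun z => z * k) h3
    have h5 : k' = k := by simpa using h4
    exact h5.symm
  have hsurj : Function.Surjective ψ := by
    intro p
    obtain ⟨w, hw⟩ := p
    refine ⟨(dlt w x₀.out (hw.trans (hout_mk x₀).symm))⁻¹, ?_⟩
    apply Subtype.ext
    show ((dlt w x₀.out (hw.trans (hout_mk x₀).symm))⁻¹)⁻¹ • x₀.out = w
    rw [inv_inv, hdlt]
  exact IsFreeGroup.ofMulEquiv (MulEquiv.ofBijective ψ ⟨hinj, hsurj⟩).symm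

end FreeKernel

end Stmt5

/-- If a group `Γ` acts on a tree `T` by graph automorphisms, without edge
inversions, with all vertex stabilizers finite of order dividing `M`, then
there is a homomorphism from `Γ` to the symmetric group on `M` letters whose
kernel is torsion-free; moreover the kernel is a free group. -/
theorem stmt_5 (V : Type) (T : SimpleGraph V) (hT : T.IsTree)
    (Γ : Type) [Group Γ] [MulAction Γ V]
    (hadj : ∀ (γ : Γ) (v w : V), T.Adj v w → T.Adj (γ • v) (γ • w))
    (hninv : ∀ (γ : Γ) (v w : V), T.Adj v w → ¬(γ • v = w ∧ γ • w = v))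
    (M : ℕ) (hM : 0 < M)
    (hfin : ∀ v : V, Finite (MulAction.stabilizer Γ v))
    (hstab : ∀ v : V, Nat.card (MulAction.stabilizer Γ v) ∣ M) :
    ∃ f : Γ →* Equiv.Perm (Fin M),
      (∀ g : f.ker, g ≠ 1 → ¬IsOfFinOrder g) ∧ IsFreeGroup f.ker := by
  classical
  obtain ⟨f, hf⟩ := Stmt5.exists_good_hom hT hadj hninv M hM hfin hstab
  have hker : ∀ (γ : Γ), γ ∈ f.ker → ∀ v : V, γ • v = v → γ = 1 := by
    intro γ hγ v hv
    exact hf γ v hv hγ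
  refine ⟨f, ?_, ?_⟩
  · -- torsion-free kernel
    intro g hg hord
    have h1 : IsOfFinOrder (g : Γ) := by
      obtain ⟨n, hn, hgn⟩ := isOfFinOrder_iff_pow_eq_one.mp hord
      refine isOfFinOrder_iff_pow_eq_one.mpr ⟨n, hn, ?_⟩
      have := congrArg (Subtype.val) hgn
      simpa using this
    obtain ⟨v, hv⟩ := Stmt5.exists_fixed_point hT hadj hninv (g : Γ) h1
    exact hg (Subtype.ext (hker (g : Γ) g.2 v hv))
  · -- free kernel
    refine Stmt5.isFreeGroup_of_free_action (T := T) (↥f.ker) hT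
      (fun k v w h => hadj (k : Γ) v w h)
      (fun k v w h => hninv (k : Γ) v w h)
      (fun k v hkv => ?_)
    exact Subtype.ext (hker (k : Γ) k.2 v hkv)
end
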